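/- arXiv:1809.10284 — 7 statements merged into one kernel-verified Lean document; each statement's English description precedes it below -/
import Mathlib

section
/- Let B be a reflexive real Banach space with duality mapping J, Y ⊆ ℝ, and let E : ℝ^m × Y^m → ℝ and Ω : B → ℝ be an arbitrary error functional and regulariser satisfying the general assumption that minimisers of the relevant problems always exist. If the regularised interpolation problem satisfies the linear representer theorem (i.e. Ω is admissible), then for every m, all L₁,…,L_m ∈ B*, all y ∈ Y^m and every λ > 0 the regularisation problem min{E((L_i(f))_{i=1}^m, y) + λΩ(f) : f ∈ B} admits a minimiser f with Σ_{i=1}^m c_i L_i ∈ J(f) for some c₁,…,c_m ∈ ℝ. -/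
open scoped Classical

/-- The duality mapping of a real normed space `B` into its dual (gauge the identity):
`J(0) = {0}` and for `x ≠ 0`, `J(x) = {L : L x = ‖L‖‖x‖, ‖L‖ = ‖x‖}`. -/
noncomputable def dualityMap (B : Type*) [NormedAddCommGroup B] [NormedSpace ℝ B] (x : B) :
    Set (B →L[ℝ] ℝ) :=
  if x = 0 then {0} else {L : B →L[ℝ] ℝ | L x = ‖L‖ * ‖x‖ ∧ ‖L‖ = ‖x‖}

/-- A normed space is reflexive if the canonical inclusion into its double dual is surjective. -/
def IsReflexive (B : Type*) [NormedAddCommGroup B] [NormedSpace ℝ B] : Prop :=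
  Function.Surjective (NormedSpace.inclusionInDoubleDual ℝ B)

/-- `Ω` is admissible: every consistent regularised interpolation problem admits a solution
whose dual element lies in the span of the defining functionals. -/
def Admissible {B : Type*} [NormedAddCommGroup B] [NormedSpace ℝ B] (Ω : B → ℝ) : Prop :=
  ∀ (m : ℕ) (L : Fin m → (B →L[ℝ] ℝ)) (y : Fin m → ℝ),
    (∃ f : B, ∀ i, L i f = y i) →
    ∃ f : B, (∀ i, L i f = y i) ∧
      (∀ g : B, (∀ i, L i g = y i) → Ω f ≤ Ω g) ∧
      ∃ c : Fin m → ℝ, (∑ i, c i • L i) ∈ dualityMap B f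


/-- If the regularised interpolation problem satisfies the linear
representer theorem (i.e. `Ω` is admissible) and minimisers of the regularisation
problems always exist, then each regularisation problem admits a minimiser whose
dual element lies in the span of the defining functionals. -/
theorem interpolation_representer_implies_regularisation_representer
    {B : Type*} [NormedAddCommGroup B] [NormedSpace ℝ B] [CompleteSpace B]
    (hrefl : IsReflexive B) (Y : Set ℝ)
    (E : ∀ m : ℕ, (Fin m → ℝ) → (Fin m → ℝ) → ℝ)
    (Ω : B → ℝ)
    (hmin_exists : ∀ (m : ℕ) (L : Fin m → (B →L[ℝ] ℝ)) (y : Fin m → ℝ), (∀ i, y i ∈ Y) →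
      ∀ lam : ℝ, 0 < lam →
      ∃ f : B, ∀ g : B,
        E m (fun i => L i f) y + lam * Ω f ≤ E m (fun i => L i g) y + lam * Ω g)
    (hadm : Admissible Ω) :
    ∀ (m : ℕ) (L : Fin m → (B →L[ℝ] ℝ)) (y : Fin m → ℝ), (∀ i, y i ∈ Y) →
      ∀ lam : ℝ, 0 < lam →
      ∃ f : B,
        (∀ g : B, E m (fun i => L i f) y + lam * Ω f ≤ E m (fun i => L i g) y + lam * Ω g) ∧
        ∃ c : Fin m → ℝ, (∑ i, c i • L i) ∈ dualityMap B f := by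
  intro m L y hy lam hlam
  obtain ⟨f₀, hf₀⟩ := hmin_exists m L y hy lam hlam
  obtain ⟨f, hfeq, hfmin, c, hc⟩ := hadm m L (fun i => L i f₀) ⟨f₀, fun i => rfl⟩
  refine ⟨f, fun g => ?_, c, hc⟩
  have h1 : E m (fun i => L i f) y = E m (fun i => L i f₀) y := by
    congr 1; funext i; exact hfeq i
  have h2 : Ω f ≤ Ω f₀ := hfmin f₀ fun i => rfl
  calc E m (fun i => L i f) y + lam * Ω f
      ≤ E m (fun i => L i f₀) y + lam * Ω f₀ := by
        rw [h1]; gcongr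
    _ ≤ _ := hf₀ g
end

section
/- (Beurling–Livingston) Let V be a real normed linear space with duality mapping J with gauge function μ, and let W be a reflexive closed subspace of V. Then for any fixed x₀ ∈ V and u₀* ∈ V* there exists z ∈ W such that J(x₀ + z) ∩ (W° − u₀*) ≠ ∅, where W° = {L ∈ V* : L(w) = 0 for all w ∈ W} denotes the annihilator of W in V*. -/
open scoped Classical

open scoped Topology

/-- A gauge function: continuous, strictly increasing on `[0,∞)`, vanishing at `0` and
tending to infinity. -/
def IsGauge (μ : ℝ → ℝ) : Prop :=
  ContinuousOn μ (Set.Ici 0) ∧ StrictMonoOn μ (Set.Ici 0) ∧ μ 0 = 0 ∧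
    Filter.Tendsto μ Filter.atTop Filter.atTop

/-- The duality mapping of a real normed space `V` into its dual with gauge `μ`:
`J(0) = {0}` and for `x ≠ 0`, `J(x) = {L : L x = ‖L‖‖x‖, ‖L‖ = μ(‖x‖)}`. -/
noncomputable def dualityMapGauge {V : Type*} [NormedAddCommGroup V] [NormedSpace ℝ V]
    (μ : ℝ → ℝ) (x : V) : Set (V →L[ℝ] ℝ) :=
  if x = 0 then {0} else {L : V →L[ℝ] ℝ | L x = ‖L‖ * ‖x‖ ∧ ‖L‖ = μ ‖x‖}

namespace BL

noncomputable def nu (μ : ℝ → ℝ) (t : ℝ) : ℝ := μ (max t 0)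

noncomputable def Phi (μ : ℝ → ℝ) (t : ℝ) : ℝ := ∫ s in (0:ℝ)..t, nu μ s

variable {μ : ℝ → ℝ}

def IsGauge' (μ : ℝ → ℝ) : Prop :=
  ContinuousOn μ (Set.Ici 0) ∧ StrictMonoOn μ (Set.Ici 0) ∧ μ 0 = 0 ∧
    Filter.Tendsto μ Filter.atTop Filter.atTop

theorem nu_cont (hμ : IsGauge' μ) : Continuous (nu μ) :=
  hμ.1.comp_continuous (continuous_id.max continuous_const) (fun t => le_max_right t 0)

theorem nu_mono (hμ : IsGauge' μ) : Monotone (nu μ) := fun a b hab =>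
  hμ.2.1.monotoneOn (le_max_right a 0) (le_max_right b 0) (max_le_max hab le_rfl)

theorem nu_nonneg (hμ : IsGauge' μ) (t : ℝ) : 0 ≤ nu μ t := by
  have := hμ.2.1.monotoneOn (le_refl (0:ℝ) : (0:ℝ) ∈ Set.Ici 0) (le_max_right t 0)
    (le_max_right t 0)
  simpa [nu, hμ.2.2.1] using this

theorem nu_eq (hμ : IsGauge' μ) {t : ℝ} (ht : 0 ≤ t) : nu μ t = μ t := by
  simp [nu, max_eq_left ht]

theorem phi_hasDeriv (hμ : IsGauge' μ) (t : ℝ) : HasDerivAt (Phi μ) (nu μ t) t :=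
  intervalIntegral.integral_hasDerivAt_right ((nu_cont hμ).intervalIntegrable _ _)
    ((nu_cont hμ).stronglyMeasurableAtFilter _ _) (nu_cont hμ).continuousAt

theorem phi_cont (hμ : IsGauge' μ) : Continuous (Phi μ) :=
  continuous_iff_continuousAt.2 fun t => (phi_hasDeriv hμ t).continuousAt

theorem phi_zero : Phi μ 0 = 0 := by simp [Phi]

theorem phi_mono (hμ : IsGauge' μ) : Monotone (Phi μ) := by
  intro a b hab
  have h1 : Phi μ a + ∫ s in a..b, nu μ s = Phi μ b :=
    intervalIntegral.integral_add_adjacent_intervals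
      ((nu_cont hμ).intervalIntegrable _ _) ((nu_cont hμ).intervalIntegrable _ _)
  have h2 : 0 ≤ ∫ s in a..b, nu μ s :=
    intervalIntegral.integral_nonneg hab (fun u _ => nu_nonneg hμ u)
  linarith

theorem phi_convexOn (hμ : IsGauge' μ) : ConvexOn ℝ Set.univ (Phi μ) := by
  have hd : Differentiable ℝ (Phi μ) := fun t => (phi_hasDeriv hμ t).differentiableAt
  have hderiv : deriv (Phi μ) = nu μ := funext fun t => (phi_hasDeriv hμ t).deriv
  exact Monotone.convexOn_univ_of_deriv hd (hderiv ▸ nu_mono hμ)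

theorem phi_lower (hμ : IsGauge' μ) (c : ℝ) :
    ∃ T : ℝ, 0 ≤ T ∧ ∀ t, T ≤ t → c * (t - T) ≤ Phi μ t := by
  obtain ⟨T₀, hT₀⟩ := (hμ.2.2.2.eventually_ge_atTop c).exists_forall_of_atTop
  refine ⟨max T₀ 0, le_max_right _ _, fun t ht => ?_⟩
  set T := max T₀ 0
  have hT0 : (0:ℝ) ≤ T := le_max_right _ _
  have h1 : Phi μ T + ∫ s in T..t, nu μ s = Phi μ t :=
    intervalIntegral.integral_add_adjacent_intervals
      ((nu_cont hμ).intervalIntegrable _ _) ((nu_cont hμ).intervalIntegrable _ _)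
  have h2 : (0:ℝ) ≤ Phi μ T := by
    have := phi_mono hμ hT0
    simpa [phi_zero] using this
  have h3 : ∫ s in T..t, (c:ℝ) ≤ ∫ s in T..t, nu μ s := by
    apply intervalIntegral.integral_mono_on ht intervalIntegrable_const
      ((nu_cont hμ).intervalIntegrable _ _)
    intro s hs
    have hs0 : (0:ℝ) ≤ s := hT0.trans hs.1
    rw [nu_eq hμ hs0]
    exact hT₀ s ((le_max_left T₀ 0).trans hs.1)
  have h4 : ∫ s in T..t, (c:ℝ) = (t - T) * c := by
    simp [intervalIntegral.integral_const]
  nlinarith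

theorem phiNorm_convexOn (hμ : IsGauge' μ) {V : Type*} [NormedAddCommGroup V]
    [NormedSpace ℝ V] (a : V) : ConvexOn ℝ Set.univ (fun v : V => Phi μ ‖a + v‖) := by
  refine ⟨convex_univ, fun x _ y _ s t hs ht hst => ?_⟩
  have heq : a + (s • x + t • y) = s • (a + x) + t • (a + y) := by
    have ha : s • a + t • a = a := by rw [← add_smul, hst, one_smul]
    rw [smul_add, smul_add]
    calc a + (s • x + t • y) = (s • a + t • a) + (s • x + t • y) := by rw [ha]
      _ = s • a + s • x + (t • a + t • y) := by abel
  have h1 : ‖a + (s • x + t • y)‖ ≤ s * ‖a + x‖ + t * ‖a + y‖ := by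
    rw [heq]
    refine (norm_add_le _ _).trans ?_
    rw [norm_smul, norm_smul, Real.norm_eq_abs, Real.norm_eq_abs, abs_of_nonneg hs,
      abs_of_nonneg ht]
  have h2 := phi_mono hμ h1
  have h3 := (phi_convexOn hμ).2 (Set.mem_univ ‖a + x‖) (Set.mem_univ ‖a + y‖) hs ht hst
  simp only [smul_eq_mul] at h3
  exact h2.trans h3

end BL


namespace BL

variable {V : Type*} [NormedAddCommGroup V] [NormedSpace ℝ V]

/-- right difference quotient at 0 of `t ↦ g (t • v)`. -/
noncomputable def slp (g : V → ℝ) (v : V) (t : ℝ) : ℝ := (g (t • v) - g 0) / t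

/-- the one-sided directional derivative (as an inf of slopes). -/
noncomputable def dd (g : V → ℝ) (v : V) : ℝ := sInf (slp g v '' Set.Ioi 0)

variable {g : V → ℝ}

theorem slp_mono (hg : ConvexOn ℝ Set.univ g) (v : V) {s t : ℝ} (hs : 0 < s) (hst : s ≤ t) :
    slp g v s ≤ slp g v t := by
  have ht : 0 < t := hs.trans_le hst
  have key : g (s • v) - g 0 ≤ (s / t) * (g (t • v) - g 0) := by
    have h := hg.2 (Set.mem_univ (t • v)) (Set.mem_univ (0 : V))
      (div_nonneg hs.le ht.le) (show (0:ℝ) ≤ 1 - s / t by rw [sub_nonneg]; exact (div_le_one ht).2 hst)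
      (by ring)
    have hsm : (s / t) • (t • v) = s • v := by
      rw [smul_smul, div_mul_cancel₀ _ ht.ne']
    rw [hsm, smul_zero, add_zero, smul_eq_mul, smul_eq_mul] at h
    nlinarith [h]
  rw [slp, slp, div_le_div_iff₀ hs ht]
  have h2 : (s / t) * (g (t • v) - g 0) * t = (g (t • v) - g 0) * s := by
    field_simp
  nlinarith [mul_le_mul_of_nonneg_right key ht.le]

theorem slp_lb (hg : ConvexOn ℝ Set.univ g) (v : V) {t : ℝ} (ht : 0 < t) :
    g 0 - g (-v) ≤ slp g v t := by
  have h1t : (0:ℝ) < 1 + t := by linarith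
  have h := hg.2 (Set.mem_univ (-v)) (Set.mem_univ (t • v))
    (by positivity : (0:ℝ) ≤ t / (1 + t)) (by positivity : (0:ℝ) ≤ 1 / (1 + t))
    (by field_simp; ring)
  have hsm : (t / (1 + t)) • (-v) + (1 / (1 + t)) • (t • v) = (0 : V) := by
    rw [smul_smul, smul_neg, show 1 / (1 + t) * t = t / (1 + t) by ring, neg_add_cancel]
  rw [hsm, smul_eq_mul, smul_eq_mul] at h
  have h' := mul_le_mul_of_nonneg_right h h1t.le
  have e : (t / (1 + t) * g (-v) + 1 / (1 + t) * g (t • v)) * (1 + t)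
      = t * g (-v) + g (t • v) := by field_simp; try ring
  rw [e] at h'
  rw [slp, le_div_iff₀ ht]
  nlinarith [h']

theorem dd_bddBelow (hg : ConvexOn ℝ Set.univ g) (v : V) :
    BddBelow (slp g v '' Set.Ioi 0) := by
  refine ⟨g 0 - g (-v), ?_⟩
  rintro x ⟨t, ht, rfl⟩
  exact slp_lb hg v ht

theorem dd_nonempty (v : V) : (slp g v '' Set.Ioi 0).Nonempty :=
  ⟨slp g v 1, 1, Set.mem_Ioi.2 one_pos, rfl⟩

theorem dd_le (hg : ConvexOn ℝ Set.univ g) (v : V) {t : ℝ} (ht : 0 < t) :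
    dd g v ≤ slp g v t :=
  csInf_le (dd_bddBelow hg v) ⟨t, ht, rfl⟩

theorem le_dd (v : V) {c : ℝ} (h : ∀ t : ℝ, 0 < t → c ≤ slp g v t) : c ≤ dd g v :=
  le_csInf (dd_nonempty v) (by rintro x ⟨t, ht, rfl⟩; exact h t ht)

theorem dd_add (hg : ConvexOn ℝ Set.univ g) (v w : V) :
    dd g (v + w) ≤ dd g v + dd g w := by
  refine le_of_forall_pos_le_add fun ε hε => ?_
  obtain ⟨x, ⟨t1, ht1, rfl⟩, hx⟩ := exists_lt_of_csInf_lt (dd_nonempty v)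
    (lt_add_of_pos_right (dd g v) (half_pos hε))
  obtain ⟨y, ⟨t2, ht2, rfl⟩, hy⟩ := exists_lt_of_csInf_lt (dd_nonempty w)
    (lt_add_of_pos_right (dd g w) (half_pos hε))
  simp only [Set.mem_Ioi] at ht1 ht2
  set t : ℝ := min t1 t2 / 2 with htdef
  have ht : 0 < t := by rw [htdef]; positivity
  have h2t1 : 2 * t ≤ t1 := by
    have := min_le_left t1 t2; rw [htdef]; linarith
  have h2t2 : 2 * t ≤ t2 := by
    have := min_le_right t1 t2; rw [htdef]; linarith
  have hsub : slp g (v + w) t ≤ slp g v (2 * t) + slp g w (2 * t) := by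
    have h := hg.2 (Set.mem_univ ((2 * t) • v)) (Set.mem_univ ((2 * t) • w))
      (by norm_num : (0:ℝ) ≤ (1:ℝ)/2) (by norm_num : (0:ℝ) ≤ (1:ℝ)/2) (by norm_num)
    have hsm : ((1:ℝ)/2) • ((2 * t) • v) + ((1:ℝ)/2) • ((2 * t) • w) = t • (v + w) := by
      module
    rw [hsm, smul_eq_mul, smul_eq_mul] at h
    rw [slp, slp, slp, ← add_div, div_le_div_iff₀ ht (by linarith : (0:ℝ) < 2 * t)]
    nlinarith [h]
  have hfin := hsub.trans (add_le_add (slp_mono hg v (by linarith) h2t1)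
    (slp_mono hg w (by linarith) h2t2))
  calc dd g (v + w) ≤ slp g (v + w) t := dd_le hg _ ht
    _ ≤ slp g v t1 + slp g w t2 := hfin
    _ ≤ dd g v + ε / 2 + (dd g w + ε / 2) := add_le_add hx.le hy.le
    _ = dd g v + dd g w + ε := by ring

theorem dd_smul_le (hg : ConvexOn ℝ Set.univ g) (v : V) {c : ℝ} (hc : 0 < c) :
    dd g (c • v) ≤ c * dd g v := by
  have h1 : dd g (c • v) / c ≤ dd g v := by
    refine le_dd v fun t ht => ?_
    rw [div_le_iff₀ hc]
    have heq : slp g v t * c = slp g (c • v) (t / c) := by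
      have hsm : (t / c) • (c • v) = t • v := by rw [smul_smul, div_mul_cancel₀ _ hc.ne']
      rw [slp, slp, hsm]
      field_simp
    rw [heq]
    exact dd_le hg _ (div_pos ht hc)
  have := (div_le_iff₀ hc).1 h1
  linarith

theorem dd_smul (hg : ConvexOn ℝ Set.univ g) (v : V) {c : ℝ} (hc : 0 < c) :
    dd g (c • v) = c * dd g v := by
  refine le_antisymm (dd_smul_le hg v hc) ?_
  have h := dd_smul_le hg (c • v) (inv_pos.2 hc)
  rw [smul_smul, inv_mul_cancel₀ hc.ne', one_smul] at h
  calc c * dd g v ≤ c * (c⁻¹ * dd g (c • v)) := mul_le_mul_of_nonneg_left h hc.le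
    _ = dd g (c • v) := by field_simp

end BL


namespace BL

open NormedSpace

theorem exists_min {B : Type*} [NormedAddCommGroup B] [NormedSpace ℝ B]
    (hrefl : IsReflexive B) (f : B → ℝ) (hconv : ConvexOn ℝ Set.univ f)
    (hcont : Continuous f) (R : ℝ) (hR : 0 ≤ R)
    (hcoer : ∀ z : B, R ≤ ‖z‖ → f 0 < f z) :
    ∃ z : B, ∀ z', f z ≤ f z' := by
  classical
  set ι : B →L[ℝ] StrongDual ℝ (StrongDual ℝ B) := inclusionInDoubleDual ℝ B with hι
  have hnorm : ∀ z : B, ‖ι z‖ = ‖z‖ := fun z =>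
    (inclusionInDoubleDualLi ℝ (E := B)).norm_map z
  set j : B → WeakDual ℝ (StrongDual ℝ B) := fun z => StrongDual.toWeakDual (ι z) with hj
  have hjapp : ∀ (z : B) (φ : StrongDual ℝ B), j z φ = φ z := fun z φ => rfl
  have hjinj : Function.Injective j := by
    intro a b hab
    have h1 : ι a = ι b := StrongDual.toWeakDual.injective hab
    have h2 : ‖a - b‖ = 0 := by
      rw [← hnorm (a - b), map_sub, h1, sub_self]; exact norm_zero (E := StrongDual ℝ (StrongDual ℝ B))
    rwa [norm_eq_zero, sub_eq_zero] at h2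
  -- images of closed convex sets are weak-* closed
  have hclosed_img : ∀ S : Set B, Convex ℝ S → IsClosed S → IsClosed (j '' S) := by
    intro S hSc hScl
    rw [← isOpen_compl_iff, isOpen_iff_forall_mem_open]
    intro Ψ hΨ
    obtain ⟨z₀, hz₀⟩ := hrefl (StrongDual.toWeakDual.symm Ψ)
    have hjz₀ : j z₀ = Ψ := by
      rw [hj]; simp only [hι, hz₀]; exact (StrongDual.toWeakDual.apply_symm_apply Ψ)
    have hz₀S : z₀ ∉ S := fun h => hΨ ⟨z₀, h, hjz₀⟩
    obtain ⟨φ, u, hu1, hu2⟩ := geometric_hahn_banach_closed_point hSc hScl hz₀S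
    refine ⟨{Ψ' : WeakDual ℝ (StrongDual ℝ B) | u < Ψ' φ}, ?_, ?_, ?_⟩
    · rintro Ψ' hΨ' ⟨a, haS, rfl⟩
      have : j a φ = φ a := hjapp a φ
      rw [Set.mem_setOf_eq, this] at hΨ'
      exact absurd (hu1 a haS) (not_lt.2 hΨ'.le)
    · exact isOpen_lt continuous_const (WeakDual.eval_continuous φ)
    · rw [Set.mem_setOf_eq, ← hjz₀, hjapp]; exact hu2
  -- the constraint set
  set S : Set B := {z : B | f z ≤ f 0} ∩ Metric.closedBall 0 R with hS
  have hS0 : (0:B) ∈ S := ⟨show f 0 ≤ f 0 from le_rfl, by simpa using hR⟩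
  have hSconv : Convex ℝ S := by
    refine Convex.inter ?_ (convex_closedBall 0 R)
    have := hconv.convex_le (f 0)
    simpa using this
  have hScl : IsClosed S := (isClosed_le hcont continuous_const).inter Metric.isClosed_closedBall
  have hSball : ∀ z ∈ S, ‖z‖ ≤ R := fun z hz => by
    simpa using mem_closedBall_iff_norm.1 hz.2
  -- the directed family of sublevel sets
  haveI : Nonempty ↥S := ⟨⟨0, hS0⟩⟩
  set t : ↥S → Set (WeakDual ℝ (StrongDual ℝ B)) := fun s => j '' (S ∩ {z | f z ≤ f ↑s}) with hT
  have htcl : ∀ s, IsClosed (t s) := by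
    intro s
    apply hclosed_img
    · exact hSconv.inter (by simpa using hconv.convex_le (f ↑s))
    · exact hScl.inter (isClosed_le hcont continuous_const)
  have htsubball : ∀ s, t s ⊆ StrongDual.toWeakDual '' Metric.closedBall (0 : StrongDual ℝ (StrongDual ℝ B)) R := by
    rintro s _ ⟨z, ⟨hzS, _⟩, rfl⟩
    exact ⟨ι z, (mem_closedBall_zero_iff (E := StrongDual ℝ (StrongDual ℝ B))).2 ((hnorm z).le.trans (hSball z hzS)), rfl⟩
  have hballcpt : IsCompact (StrongDual.toWeakDual '' Metric.closedBall (0 : StrongDual ℝ (StrongDual ℝ B)) R) := by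
    have h := WeakDual.isCompact_closedBall (𝕜 := ℝ) (E := StrongDual ℝ B) 0 R
    have himg : StrongDual.toWeakDual '' Metric.closedBall (0 : StrongDual ℝ (StrongDual ℝ B)) R
        = WeakDual.toStrongDual ⁻¹' Metric.closedBall 0 R := by
      ext Ψ
      constructor
      · rintro ⟨x, hx, rfl⟩; exact hx
      · intro hΨ; exact ⟨WeakDual.toStrongDual Ψ, hΨ, rfl⟩
    rwa [himg]
  have htc : ∀ s, IsCompact (t s) := fun s =>
    hballcpt.of_isClosed_subset (htcl s) (htsubball s)
  have htn : ∀ s, (t s).Nonempty := fun s => ⟨j ↑s, ↑s, ⟨s.2, show f ↑s ≤ f ↑s from le_rfl⟩, rfl⟩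
  have htd : Directed (· ⊇ ·) t := by
    intro a b
    rcases le_total (f ↑a) (f ↑b) with h | h
    · exact ⟨a, fun x ⟨z, ⟨h1, h2⟩, h3⟩ => ⟨z, ⟨h1, h2⟩, h3⟩,
        fun x ⟨z, ⟨h1, h2⟩, h3⟩ => ⟨z, ⟨h1, h2.trans h⟩, h3⟩⟩
    · exact ⟨b, fun x ⟨z, ⟨h1, h2⟩, h3⟩ => ⟨z, ⟨h1, h2.trans h⟩, h3⟩,
        fun x ⟨z, ⟨h1, h2⟩, h3⟩ => ⟨z, ⟨h1, h2⟩, h3⟩⟩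
  obtain ⟨Ψ, hΨ⟩ := IsCompact.nonempty_iInter_of_directed_nonempty_isCompact_isClosed
    t htd htn htc htcl
  simp only [Set.mem_iInter] at hΨ
  obtain ⟨z, ⟨hzS, _⟩, hjz⟩ := hΨ ⟨0, hS0⟩
  have hmin : ∀ s : ↥S, f z ≤ f ↑s := by
    intro s
    obtain ⟨z', ⟨_, hz'⟩, hjz'⟩ := hΨ s
    rwa [← hjinj (hjz'.trans hjz.symm)]
  refine ⟨z, fun z' => ?_⟩
  by_cases hz' : z' ∈ S
  · exact hmin ⟨z', hz'⟩
  · have h0 : f z ≤ f 0 := hmin ⟨0, hS0⟩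
    rcases le_or_gt R ‖z'‖ with h | h
    · exact h0.trans (hcoer z' h).le
    · have : ¬ f z' ≤ f 0 := fun hle => hz' ⟨hle, by simpa using h.le⟩
      exact h0.trans (not_le.1 this).le

end BL


/-- **Beurling–Livingston.** Let `V` be a real normed space with duality mapping
`J` with gauge `μ` and `W` a reflexive closed subspace of `V`. Then for any `x₀ ∈ V` and
`u₀* ∈ V*` there exists `z ∈ W` with `J(x₀ + z) ∩ (W° − u₀*) ≠ ∅`. -/
theorem beurling_livingston
    {V : Type*} [NormedAddCommGroup V] [NormedSpace ℝ V]
    (μ : ℝ → ℝ) (hμ : IsGauge μ)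
    (W : Submodule ℝ V) (hWclosed : IsClosed (W : Set V)) (hWrefl : IsReflexive W)
    (x₀ : V) (u₀ : V →L[ℝ] ℝ) :
    ∃ z ∈ W, ∃ L ∈ dualityMapGauge μ (x₀ + z),
      ∃ L' : V →L[ℝ] ℝ, (∀ w ∈ W, L' w = 0) ∧ L = L' - u₀ := by
  classical
  have hG : BL.IsGauge' μ := hμ
  set Φ : ℝ → ℝ := BL.Phi μ with hΦ
  set f : ↥W → ℝ := fun z => Φ ‖x₀ + (z : V)‖ + u₀ (z : V) with hf
  -- convexity of f
  have hfconv : ConvexOn ℝ Set.univ f := by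
    refine ⟨convex_univ, fun z1 _ z2 _ s t hs ht hst => ?_⟩
    have h1 := (BL.phiNorm_convexOn hG x₀).2 (Set.mem_univ ((z1 : V))) (Set.mem_univ ((z2 : V)))
      hs ht hst
    have hco : ((s • z1 + t • z2 : ↥W) : V) = s • (z1 : V) + t • (z2 : V) := by
      push_cast; rfl
    have h2 : u₀ (s • (z1 : V) + t • (z2 : V)) = s * u₀ (z1 : V) + t * u₀ (z2 : V) := by
      rw [map_add, map_smul, map_smul]; rfl
    simp only [hf, hco, smul_eq_mul] at h1 ⊢
    rw [h2]; linarith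
  -- continuity of f
  have hfcont : Continuous f := by
    refine Continuous.add ?_ (u₀.continuous.comp continuous_subtype_val)
    exact (BL.phi_cont hG).comp ((continuous_const.add continuous_subtype_val).norm)
  -- coercivity
  obtain ⟨T, hT0, hTphi⟩ := BL.phi_lower hG (‖u₀‖ + 1)
  set R : ℝ := (‖u₀‖ + 1) * (T + ‖x₀‖) + |f 0| + |Φ ‖x₀‖| + T + ‖x₀‖ + 1 with hRdef
  have hR0 : 0 ≤ R := by
    have h1 : (0:ℝ) ≤ (‖u₀‖ + 1) * (T + ‖x₀‖) := by positivity
    have h2 := abs_nonneg (f 0); have h3 := abs_nonneg (Φ ‖x₀‖)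
    have h4 := norm_nonneg x₀; linarith
  have hf0 : f 0 = Φ ‖x₀‖ := by simp [hf]
  have hcoer : ∀ z : ↥W, R ≤ ‖z‖ → f 0 < f z := by
    intro z hz
    rw [hRdef] at hz
    set n := ‖x₀ + (z : V)‖ with hn
    have hnz : ‖(z : V)‖ = ‖z‖ := rfl
    have h1 : ‖z‖ - ‖x₀‖ ≤ n := by
      have h := norm_add_le (x₀ + (z : V)) (-x₀)
      have he : x₀ + (z : V) + -x₀ = (z : V) := by abel
      rw [he, norm_neg, hnz] at h
      linarith
    have hprod : (0:ℝ) ≤ (‖u₀‖ + 1) * (T + ‖x₀‖) := by positivity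
    have hTn : T ≤ n := by
      have h2 := abs_nonneg (f 0); have h3 := abs_nonneg (Φ ‖x₀‖)
      have h4 := norm_nonneg x₀; linarith
    have h2 : (‖u₀‖ + 1) * (n - T) ≤ Φ n := hTphi n hTn
    have h3 : -(‖u₀‖ * ‖z‖) ≤ u₀ (z : V) := by
      have h := u₀.le_opNorm (z : V)
      rw [Real.norm_eq_abs, hnz] at h
      linarith [neg_abs_le (u₀ (z : V))]
    have h4 : (‖u₀‖ + 1) * (‖z‖ - ‖x₀‖ - T) ≤ (‖u₀‖ + 1) * (n - T) := by
      have : (0:ℝ) ≤ ‖u₀‖ + 1 := by positivity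
      nlinarith
    have hfz : f z = Φ n + u₀ (z : V) := rfl
    rw [hfz, hf0]
    nlinarith [le_abs_self (Φ ‖x₀‖), abs_nonneg (f 0), norm_nonneg u₀]
  -- minimizer
  obtain ⟨zs, hzs⟩ := BL.exists_min hWrefl f hfconv hfcont R hR0 hcoer
  set xs : V := x₀ + (zs : V) with hxs
  set q : V → ℝ := fun v => Φ ‖xs + v‖ with hq
  have hqconv : ConvexOn ℝ Set.univ q := BL.phiNorm_convexOn hG xs
  have hq0 : q 0 = Φ ‖xs‖ := by simp [hq]
  set p : V → ℝ := BL.dd q with hp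
  have hple : ∀ v, p v ≤ q v - q 0 := by
    intro v
    have h := BL.dd_le hqconv v one_pos
    rw [BL.slp, one_smul, div_one] at h
    exact h
  -- domination on W
  have hdom : ∀ x : ↥W, -(u₀ (x : V)) ≤ p (x : V) := by
    intro x
    refine BL.le_dd _ fun t ht => ?_
    have hmin := hzs (zs + t • x)
    have hco : ((zs + t • x : ↥W) : V) = (zs : V) + t • (x : V) := by push_cast; rfl
    have hfz : f (zs + t • x) = Φ ‖xs + t • (x : V)‖ + (u₀ (zs : V) + t * u₀ (x : V)) := by
      simp only [hf, hco]
      rw [← add_assoc, ← hxs, map_add, map_smul]; rfl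
    have hfzs : f zs = Φ ‖xs‖ + u₀ (zs : V) := rfl
    rw [hfz, hfzs] at hmin
    have hval : q (t • (x : V)) = Φ ‖xs + t • (x : V)‖ := rfl
    rw [BL.slp, le_div_iff₀ ht, hval, hq0]
    linarith
  -- Hahn-Banach extension
  set σ : V →ₗ[ℝ] ℝ := ((-u₀ : V →L[ℝ] ℝ) : V →ₗ[ℝ] ℝ) with hσ
  set f₀ : V →ₗ.[ℝ] ℝ := σ.toPMap W with hf₀def
  have hf₀ : ∀ x : f₀.domain, f₀ x ≤ p ↑x := fun x => hdom x
  obtain ⟨g, hg1, hg2⟩ := exists_extension_of_le_sublinear f₀ p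
    (fun c hc x => BL.dd_smul hqconv x hc)
    (fun x y => BL.dd_add hqconv x y) hf₀
  -- continuity of g
  have hgle : ∀ v, g v ≤ q v - q 0 := fun v => (hg2 v).trans (hple v)
  set C : ℝ := Φ (‖xs‖ + 1) - Φ ‖xs‖ with hCdef
  have hC0 : 0 ≤ C := by
    have := BL.phi_mono hG (by linarith [norm_nonneg xs] : ‖xs‖ ≤ ‖xs‖ + 1)
    rw [hCdef]; linarith
  have hgb : ∀ v : V, ‖v‖ ≤ 1 → g v ≤ C := by
    intro v hv
    have h1 := hgle v
    have h2 : ‖xs + v‖ ≤ ‖xs‖ + 1 := (norm_add_le _ _).trans (by linarith)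
    have h3 := BL.phi_mono hG h2
    have hqv : q v = Φ ‖xs + v‖ := rfl
    rw [hqv, hq0] at h1
    rw [hCdef]; linarith
  have hgC : ∀ v : V, ‖g v‖ ≤ C * ‖v‖ := by
    intro v
    rcases eq_or_ne v 0 with rfl | hv
    · simp
    · have hvn : 0 < ‖v‖ := norm_pos_iff.2 hv
      have hu1 : ‖(‖v‖⁻¹ • v)‖ = 1 := norm_smul_inv_norm hv
      have ha := hgb _ (le_of_eq hu1)
      have hb := hgb (-(‖v‖⁻¹ • v)) (by rw [norm_neg, hu1])
      rw [map_neg] at hb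
      have habs : |g (‖v‖⁻¹ • v)| ≤ C := abs_le.2 ⟨by linarith, ha⟩
      have hlin : g v = ‖v‖ * g (‖v‖⁻¹ • v) := by
        rw [← smul_eq_mul, ← g.map_smul, smul_smul, mul_inv_cancel₀ hvn.ne', one_smul]
      rw [Real.norm_eq_abs, hlin, abs_mul, abs_of_pos hvn, mul_comm]
      exact mul_le_mul_of_nonneg_right habs hvn.le
  set L : V →L[ℝ] ℝ := LinearMap.mkContinuous g C hgC with hL
  have hLapp : ∀ v, L v = g v := fun v => rfl
  have hLle : ∀ v, L v ≤ p v := fun v => hg2 v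
  have hLW : ∀ w ∈ W, L w = -(u₀ w) := by
    intro w hw
    exact hg1 ⟨w, hw⟩
  -- the witnesses
  have hWit : ∀ w ∈ W, (L + u₀) w = 0 := by
    intro w hw
    simp [ContinuousLinearMap.add_apply, hLW w hw]
  have hLeq : L = (L + u₀) - u₀ := by rw [add_sub_cancel_right]
  refine ⟨(zs : V), zs.2, L, ?_, L + u₀, hWit, hLeq⟩
  rw [← hxs]
  rcases eq_or_ne xs 0 with hxs0 | hxs0
  · -- case x* = 0 : L = 0
    have key : ∀ v : V, L v ≤ 0 := by
      intro v
      have hF : HasDerivAt (fun t : ℝ => Φ (t * ‖v‖)) (BL.nu μ (0 * ‖v‖) * ‖v‖) 0 :=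
        by have := (BL.phi_hasDeriv hG (0 * ‖v‖)).comp 0 (hasDerivAt_mul_const ‖v‖); exact this
      have h0 : BL.nu μ (0 * ‖v‖) * ‖v‖ = 0 := by
        rw [zero_mul]; simp [BL.nu, hG.2.2.1]
      rw [h0] at hF
      have hslope := hasDerivAt_iff_tendsto_slope.1 hF
      have hmono : 𝓝[>] (0:ℝ) ≤ 𝓝[≠] (0:ℝ) :=
        nhdsWithin_mono _ (fun x hx => ne_of_gt hx)
      have hev : ∀ᶠ t in 𝓝[>] (0:ℝ),
          slope (fun t : ℝ => Φ (t * ‖v‖)) 0 t = BL.slp q v t := by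
        filter_upwards [self_mem_nhdsWithin] with t ht
        have ht' : (0:ℝ) < t := ht
        rw [slope_def_field, BL.slp]
        have h1 : q (t • v) = Φ (t * ‖v‖) := by
          rw [hq]
          simp only [hxs0, zero_add]
          rw [norm_smul, Real.norm_eq_abs, abs_of_pos ht']
        have h2 : q 0 = Φ (0 * ‖v‖) := by rw [hq0, hxs0, norm_zero, zero_mul]
        rw [h1, h2]; norm_num
      have htend : Filter.Tendsto (BL.slp q v) (𝓝[>] (0:ℝ)) (𝓝 0) :=
        (hslope.mono_left hmono).congr' hev
      have hevle : ∀ᶠ t in 𝓝[>] (0:ℝ), p v ≤ BL.slp q v t := by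
        filter_upwards [self_mem_nhdsWithin] with t ht
        exact BL.dd_le hqconv v ht
      have hple0 : p v ≤ 0 := ge_of_tendsto htend hevle
      exact (hLle v).trans hple0
    have hL0 : L = 0 := by
      ext v
      have h1 := key v
      have h2 := key (-v)
      rw [map_neg] at h2
      simp only [ContinuousLinearMap.zero_apply]
      linarith
    rw [hxs0]
    simp [dualityMapGauge, hL0]
  · -- case x* ≠ 0
    set r : ℝ := ‖xs‖ with hr
    have hrpos : 0 < r := norm_pos_iff.2 hxs0
    -- upper: L xs ≤ nu μ r * r
    have hup : L xs ≤ BL.nu μ r * r := by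
      have hinner : HasDerivAt (fun t : ℝ => (1 + t) * r) r 0 := by
        simpa using ((hasDerivAt_id (0:ℝ)).const_add 1).mul_const r
      have hF : HasDerivAt (fun t : ℝ => Φ ((1 + t) * r)) (BL.nu μ ((1 + 0) * r) * r) 0 :=
        by have := (BL.phi_hasDeriv hG ((1 + 0) * r)).comp 0 hinner; exact this
      rw [show (1 + (0:ℝ)) * r = r by ring] at hF
      have hslope := hasDerivAt_iff_tendsto_slope.1 hF
      have hmono : 𝓝[>] (0:ℝ) ≤ 𝓝[≠] (0:ℝ) :=
        nhdsWithin_mono _ (fun x hx => ne_of_gt hx)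
      have hev : ∀ᶠ t in 𝓝[>] (0:ℝ),
          slope (fun t : ℝ => Φ ((1 + t) * r)) 0 t = BL.slp q xs t := by
        filter_upwards [self_mem_nhdsWithin] with t ht
        have ht' : (0:ℝ) < t := ht
        rw [slope_def_field, BL.slp]
        have h1 : q (t • xs) = Φ ((1 + t) * r) := by
          show Φ ‖xs + t • xs‖ = _
          have : xs + t • xs = (1 + t) • xs := by module
          rw [this, norm_smul, Real.norm_eq_abs, abs_of_pos (by linarith : (0:ℝ) < 1 + t), hr]
        have h2 : q 0 = Φ ((1 + 0) * r) := by rw [hq0, hr]; norm_num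
        rw [h1, h2]; norm_num
      have htend : Filter.Tendsto (BL.slp q xs) (𝓝[>] (0:ℝ)) (𝓝 (BL.nu μ r * r)) :=
        (hslope.mono_left hmono).congr' hev
      have hevle : ∀ᶠ t in 𝓝[>] (0:ℝ), L xs ≤ BL.slp q xs t := by
        filter_upwards [self_mem_nhdsWithin] with t ht
        exact (hLle xs).trans (BL.dd_le hqconv xs ht)
      exact ge_of_tendsto htend hevle
    -- lower: L (-xs) ≤ -(nu μ r * r)
    have hdown : L (-xs) ≤ -(BL.nu μ r * r) := by
      have hinner : HasDerivAt (fun t : ℝ => (1 - t) * r) (-r) 0 := by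
        simpa [sub_eq_add_neg] using (((hasDerivAt_id (0:ℝ)).neg.const_add 1).mul_const r)
      have hF : HasDerivAt (fun t : ℝ => Φ ((1 - t) * r)) (BL.nu μ ((1 - 0) * r) * (-r)) 0 :=
        by have := (BL.phi_hasDeriv hG ((1 - 0) * r)).comp 0 hinner; exact this
      rw [show (1 - (0:ℝ)) * r = r by ring] at hF
      have hslope := hasDerivAt_iff_tendsto_slope.1 hF
      have hmono : 𝓝[>] (0:ℝ) ≤ 𝓝[≠] (0:ℝ) :=
        nhdsWithin_mono _ (fun x hx => ne_of_gt hx)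
      have hev : ∀ᶠ t in 𝓝[>] (0:ℝ),
          slope (fun t : ℝ => Φ ((1 - t) * r)) 0 t = BL.slp q (-xs) t := by
        filter_upwards [Ioo_mem_nhdsGT_of_mem
          (Set.mem_Ico.2 ⟨le_rfl, zero_lt_one⟩)] with t ht
        obtain ⟨ht0, ht1⟩ := ht
        rw [slope_def_field, BL.slp]
        have h1 : q (t • (-xs)) = Φ ((1 - t) * r) := by
          show Φ ‖xs + t • (-xs)‖ = _
          have : xs + t • (-xs) = (1 - t) • xs := by module
          rw [this, norm_smul, Real.norm_eq_abs,
            abs_of_pos (by linarith : (0:ℝ) < 1 - t), hr]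
        have h2 : q 0 = Φ ((1 - 0) * r) := by rw [hq0, hr]; norm_num
        rw [h1, h2]; norm_num
      have htend : Filter.Tendsto (BL.slp q (-xs)) (𝓝[>] (0:ℝ))
          (𝓝 (BL.nu μ r * (-r))) := (hslope.mono_left hmono).congr' hev
      have hevle : ∀ᶠ t in 𝓝[>] (0:ℝ), L (-xs) ≤ BL.slp q (-xs) t := by
        filter_upwards [self_mem_nhdsWithin] with t ht
        exact (hLle (-xs)).trans (BL.dd_le hqconv (-xs) ht)
      have := ge_of_tendsto htend hevle
      linarith [this, mul_neg (BL.nu μ r) r]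
    have hnur : BL.nu μ r = μ r := BL.nu_eq hG hrpos.le
    have hLxs : L xs = μ r * r := by
      rw [map_neg] at hdown
      rw [← hnur]; linarith
    have hμr : 0 < μ r := by
      have := hG.2.1 (Set.self_mem_Ici) (Set.mem_Ici.2 hrpos.le) hrpos
      rwa [hG.2.2.1] at this
    -- sphere bound : for every u with ‖u‖ = r, L u ≤ μ r * r
    have hkey : ∀ u : V, ‖u‖ = r → L u ≤ μ r * r := by
      intro u hu
      have h1 : L u - L xs = L (u - xs) := by rw [map_sub]
      have h2 : L (u - xs) ≤ p (u - xs) := hLle _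
      have h3 : p (u - xs) ≤ q (u - xs) - q 0 := hple _
      have h4 : q (u - xs) = Φ ‖u‖ := by
        show Φ ‖xs + (u - xs)‖ = Φ ‖u‖
        rw [add_sub_cancel]
      rw [h4, hu, hq0] at h3
      rw [sub_self] at h3
      linarith [hLxs]
    -- operator norm bound
    have hnormle : ‖L‖ ≤ μ r := by
      refine L.opNorm_le_bound hμr.le fun v => ?_
      rcases eq_or_ne v 0 with rfl | hv
      · simp
      · have hvn : 0 < ‖v‖ := norm_pos_iff.2 hv
        have hset : ∀ s : ℝ, ‖(r / ‖v‖) • v‖ = r := by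
          intro s
          rw [norm_smul, Real.norm_eq_abs, abs_of_pos (by positivity), div_mul_cancel₀ _ hvn.ne']
        have hL1 := hkey _ (hset 0)
        have hL2 := hkey (-((r / ‖v‖) • v)) (by rw [norm_neg]; exact hset 0)
        rw [map_neg] at hL2
        have hsc : L ((r / ‖v‖) • v) = (r / ‖v‖) * L v := by rw [map_smul]; rfl
        rw [hsc] at hL1 hL2
        have habs : |(r / ‖v‖) * L v| ≤ μ r * r := abs_le.2 ⟨by linarith, hL1⟩
        rw [abs_mul, abs_of_pos (by positivity : (0:ℝ) < r / ‖v‖)] at habs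
        rw [Real.norm_eq_abs]
        calc |L v| = (‖v‖ / r) * ((r / ‖v‖) * |L v|) := by field_simp
          _ ≤ (‖v‖ / r) * (μ r * r) := by
              apply mul_le_mul_of_nonneg_left habs (by positivity)
          _ = μ r * ‖v‖ := by field_simp
    have hnormge : μ r ≤ ‖L‖ := by
      have h := L.le_opNorm xs
      rw [Real.norm_eq_abs, hLxs, ← hr] at h
      have h2 : μ r * r ≤ ‖L‖ * r := (le_abs_self _).trans h
      exact le_of_mul_le_mul_right (by linarith) hrpos
    have hnorm : ‖L‖ = μ r := le_antisymm hnormle hnormge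
    rw [dualityMapGauge, if_neg hxs0]
    exact ⟨by rw [hLxs, hnorm, hr], by rw [hnorm, hr]⟩
end

section
/- Let B be a reflexive real Banach space with duality mapping J and let h : [0,∞) → ℝ be nondecreasing. Then the regulariser Ω : B → ℝ defined by Ω(f) = h(‖f‖) is admissible: for any m ∈ ℕ, L₁,…,L_m ∈ B* and y₁,…,y_m ∈ ℝ such that {f ∈ B : L_i(f) = y_i for all i} is nonempty, the problem min{Ω(f) : f ∈ B, L_i(f) = y_i for all i} admits a solution f with Σ_{i=1}^m c_i L_i ∈ J(f) for some c₁,…,c_m ∈ ℝ. -/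
open scoped Classical

open NormedSpace Metric Set in
private theorem existsMinNorm
    {B : Type*} [NormedAddCommGroup B] [NormedSpace ℝ B]
    (hrefl : Function.Surjective (NormedSpace.inclusionInDoubleDual ℝ B))
    {m : ℕ} (L : Fin m → (B →L[ℝ] ℝ)) (y : Fin m → ℝ)
    (hcons : ∃ f : B, ∀ i, L i f = y i) :
    ∃ f : B, (∀ i, L i f = y i) ∧ ∀ g : B, (∀ i, L i g = y i) → ‖f‖ ≤ ‖g‖ := by
  classical
  set S : Set ℝ := (fun g : B => ‖g‖) '' {g : B | ∀ i, L i g = y i} with hS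
  obtain ⟨f₀, hf₀⟩ := hcons
  have hSne : S.Nonempty := ⟨‖f₀‖, f₀, hf₀, rfl⟩
  have hSbd : ∀ a ∈ S, 0 ≤ a := by rintro a ⟨g, -, rfl⟩; exact norm_nonneg g
  set d : ℝ := sInf S with hd
  have hd0 : 0 ≤ d := le_csInf hSne hSbd
  have hdle : ∀ g : B, (∀ i, L i g = y i) → d ≤ ‖g‖ := fun g hg =>
    csInf_le ⟨0, fun a ha => hSbd a ha⟩ ⟨g, hg, rfl⟩
  set C : ℕ → Set (WeakDual ℝ (StrongDual ℝ B)) :=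
    fun n => {Φ | ‖WeakDual.toStrongDual Φ‖ ≤ d + 1 / (n + 1)} ∩ ⋂ i, {Φ | Φ (L i) = y i}
    with hC
  have hballcl : ∀ r : ℝ, 0 ≤ r →
      IsClosed {Φ : WeakDual ℝ (StrongDual ℝ B) | ‖WeakDual.toStrongDual Φ‖ ≤ r} := by
    intro r hr
    have : {Φ : WeakDual ℝ (StrongDual ℝ B) | ‖WeakDual.toStrongDual Φ‖ ≤ r}
        = ⋂ x : StrongDual ℝ B, {Φ : WeakDual ℝ (StrongDual ℝ B) | ‖Φ x‖ ≤ r * ‖x‖} := by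
      ext Φ
      simp only [Set.mem_setOf_eq, Set.mem_iInter]
      exact ⟨fun hΦ x => (WeakDual.toStrongDual Φ).le_of_opNorm_le hΦ x,
        fun hΦ => (ContinuousLinearMap.opNorm_le_iff hr).2 hΦ⟩
    rw [this]
    exact isClosed_iInter fun x =>
      isClosed_le (WeakDual.eval_continuous x).norm continuous_const
  have hconstr : IsClosed (⋂ i, {Φ : WeakDual ℝ (StrongDual ℝ B) | Φ (L i) = y i}) :=
    isClosed_iInter fun i => isClosed_eq (WeakDual.eval_continuous (L i)) continuous_const
  have hCcpt : ∀ n, IsCompact (C n) := by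
    intro n
    have h1 : IsCompact {Φ : WeakDual ℝ (StrongDual ℝ B) |
        ‖WeakDual.toStrongDual Φ‖ ≤ d + 1/(n+1)} := by
      have : {Φ : WeakDual ℝ (StrongDual ℝ B) | ‖WeakDual.toStrongDual Φ‖ ≤ d + 1/(n+1)}
          = WeakDual.toStrongDual ⁻¹' closedBall (0 : StrongDual ℝ (StrongDual ℝ B)) (d + 1/(n+1)) := by
        ext Φ; simp [mem_closedBall_zero_iff]; exact (mem_closedBall_zero_iff (a := (WeakDual.toStrongDual Φ : StrongDual ℝ (StrongDual ℝ B)))).symm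
      rw [this]
      exact WeakDual.isCompact_closedBall (𝕜 := ℝ) (E := StrongDual ℝ B) 0 _
    exact h1.inter_right hconstr
  have hCcl : ∀ n, IsClosed (C n) :=
    fun n => (hballcl _ (by positivity)).inter hconstr
  have hCne : ∀ n, (C n).Nonempty := by
    intro n
    obtain ⟨a, ⟨g, hg, rfl⟩, hlt⟩ := Real.lt_sInf_add_pos hSne
      (show (0:ℝ) < 1/(n+1) by positivity)
    refine ⟨StrongDual.toWeakDual (inclusionInDoubleDual ℝ B g), ?_, ?_⟩
    · show ‖WeakDual.toStrongDual _‖ ≤ _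
      have hnorm : ‖inclusionInDoubleDual ℝ B g‖ = ‖g‖ :=
        (NormedSpace.inclusionInDoubleDualLi ℝ).norm_map g
      simpa [hnorm] using hlt.le
    · simp only [Set.mem_iInter, Set.mem_setOf_eq]
      intro i
      show inclusionInDoubleDual ℝ B g (L i) = y i
      exact hg i
  have hmono : ∀ a b : ℕ, a ≤ b → C b ⊆ C a := by
    intro a b hab
    apply Set.inter_subset_inter_left
    intro Φ hΦ
    refine le_trans hΦ (add_le_add_right ?_ d)
    have h1 : ((a:ℝ)+1) ≤ (b:ℝ)+1 := by exact_mod_cast add_le_add_left hab 1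
    gcongr
  have hdir : Directed (· ⊇ ·) C := fun a b =>
    ⟨max a b, hmono a _ (le_max_left a b), hmono b _ (le_max_right a b)⟩
  obtain ⟨Φ, hΦ⟩ := IsCompact.nonempty_iInter_of_directed_nonempty_isCompact_isClosed
    C hdir hCne hCcpt hCcl
  obtain ⟨f, hf⟩ := hrefl (WeakDual.toStrongDual Φ)
  have hfy : ∀ i, L i f = y i := by
    intro i
    have h1 : inclusionInDoubleDual ℝ B f (L i) = Φ (L i) := by rw [hf]; rfl
    have h2 : Φ (L i) = y i := by
      have := (Set.mem_iInter.1 (Set.mem_iInter.1 hΦ 0).2) i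
      exact this
    rw [NormedSpace.dual_def] at h1
    rw [h1, h2]
  have hfd : ‖f‖ ≤ d := by
    have hfn : ∀ n : ℕ, ‖f‖ ≤ d + 1/(n+1) := by
      intro n
      have h1 := (Set.mem_iInter.1 hΦ n).1
      have hnorm : ‖inclusionInDoubleDual ℝ B f‖ = ‖f‖ :=
        (NormedSpace.inclusionInDoubleDualLi ℝ).norm_map f
      rw [← hnorm, hf]
      exact h1
    refine le_of_forall_pos_le_add fun ε hε => ?_
    obtain ⟨n, hn⟩ := exists_nat_one_div_lt hε
    exact (hfn n).trans (by linarith)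
  exact ⟨f, hfy, fun g hg => hfd.trans (hdle g hg)⟩

open NormedSpace Metric Set in
private theorem existsDualElt
    {B : Type*} [NormedAddCommGroup B] [NormedSpace ℝ B]
    {m : ℕ} (L : Fin m → (B →L[ℝ] ℝ)) (y : Fin m → ℝ) {f : B}
    (hfy : ∀ i, L i f = y i) (hmin : ∀ g : B, (∀ i, L i g = y i) → ‖f‖ ≤ ‖g‖) :
    ∃ c : Fin m → ℝ, (∑ i, c i • L i) ∈ dualityMap B f := by
  classical
  by_cases hf : f = 0
  · refine ⟨0, ?_⟩
    simp [dualityMap, hf]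
  · have hfpos : 0 < ‖f‖ := norm_pos_iff.2 hf
    set N : Submodule ℝ B := ⨅ i, LinearMap.ker ((L i : B →ₗ[ℝ] ℝ)) with hN
    have hNmem : ∀ v : B, v ∈ N ↔ ∀ i, L i v = 0 := by
      intro v
      simp [hN, Submodule.mem_iInf, LinearMap.mem_ker]
    haveI hNcl : IsClosed (N : Set B) := by
      have : (N : Set B) = ⋂ i, (LinearMap.ker (L i : B →ₗ[ℝ] ℝ) : Set B) := by
        rw [hN, Submodule.coe_iInf]
      rw [this]
      exact isClosed_iInter fun i => ContinuousLinearMap.isClosed_ker (L i)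
    set π : B →L[ℝ] (B ⧸ N) := LinearMap.mkContinuous N.mkQ 1
      (fun x => by simpa using Submodule.Quotient.norm_mk_le N x) with hπ
    have hπ_apply : ∀ x : B, π x = Submodule.Quotient.mk x := fun x => rfl
    have hπnorm : ‖π‖ ≤ 1 := LinearMap.mkContinuous_norm_le _ zero_le_one _
    -- ‖π f‖ = ‖f‖
    have hqle : ‖π f‖ ≤ ‖f‖ := by
      rw [hπ_apply]; exact Submodule.Quotient.norm_mk_le N f
    have hqge : ‖f‖ ≤ ‖π f‖ := by
      refine le_of_forall_pos_le_add fun ε hε => ?_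
      obtain ⟨g, hg, hglt⟩ := Submodule.Quotient.norm_mk_lt (π f) hε
      have hgN : g - f ∈ N := by
        rw [← Submodule.Quotient.eq]
        exact hg.trans (hπ_apply f)
      have hgy : ∀ i, L i g = y i := by
        intro i
        have h0 : L i (g - f) = 0 := (hNmem _).1 hgN i
        rw [map_sub] at h0
        have := hfy i
        linarith
      exact (hmin g hgy).trans hglt.le
    have hq : ‖π f‖ = ‖f‖ := le_antisymm hqle hqge
    have hq0 : π f ≠ 0 := by
      rw [← norm_pos_iff, hq]; exact hfpos
    obtain ⟨ψ, hψ1, hψq⟩ := exists_dual_vector ℝ (π f) (norm_ne_zero_iff.2 hq0)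
    set Lstar : B →L[ℝ] ℝ := ‖f‖ • (ψ.comp π) with hLstar
    have hLf : Lstar f = ‖f‖ * ‖f‖ := by
      simp only [hLstar, ContinuousLinearMap.smul_apply, ContinuousLinearMap.comp_apply]
      rw [hψq, hq]
      norm_num
    have hLnorm : ‖Lstar‖ = ‖f‖ := by
      apply le_antisymm
      · calc ‖Lstar‖ ≤ ‖f‖ * ‖ψ.comp π‖ := by
              rw [hLstar]
              refine (_root_.norm_smul_le (‖f‖) (ψ.comp π)).trans ?_
              rw [Real.norm_eq_abs, abs_of_nonneg hfpos.le]
          _ ≤ ‖f‖ * (‖ψ‖ * ‖π‖) := by gcongr; exact ContinuousLinearMap.opNorm_comp_le _ _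
          _ ≤ ‖f‖ * (1 * 1) := by gcongr; exact hψ1.le
          _ = ‖f‖ := by ring
      · have := Lstar.le_opNorm f
        rw [hLf] at this
        have habs : ‖‖f‖ * ‖f‖‖ = ‖f‖ * ‖f‖ := abs_of_nonneg (by positivity)
        rw [habs] at this
        exact le_of_mul_le_mul_right (by linarith) hfpos
    -- Lstar lies in the span of the L i
    have hker : (⨅ i, LinearMap.ker ((L i : B →ₗ[ℝ] ℝ))) ≤ LinearMap.ker (Lstar : B →ₗ[ℝ] ℝ) := by
      intro v hv
      have hvN : v ∈ N := by rw [hN]; exact hv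
      have hπv : π v = 0 := by
        rw [hπ_apply, Submodule.Quotient.mk_eq_zero]; exact hvN
      simp only [LinearMap.mem_ker, ContinuousLinearMap.coe_coe, hLstar,
        ContinuousLinearMap.smul_apply, ContinuousLinearMap.comp_apply, hπv, map_zero,
        smul_zero]
    have hspan := mem_span_of_iInf_ker_le_ker hker
    obtain ⟨c, hc⟩ := (Submodule.mem_span_range_iff_exists_fun ℝ).1 hspan
    refine ⟨c, ?_⟩
    have hsum : (∑ i, c i • L i) = Lstar := by
      apply ContinuousLinearMap.coe_injective
      push_cast
      rw [← hc]
    rw [hsum, dualityMap, if_neg hf]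
    exact ⟨by rw [hLf, hLnorm], hLnorm⟩

/-- On a reflexive real Banach space, any nondecreasing function of the norm
is an admissible regulariser. -/
theorem nondecreasing_function_of_norm_admissible
    {B : Type*} [NormedAddCommGroup B] [NormedSpace ℝ B] [CompleteSpace B]
    (hrefl : IsReflexive B) (h : ℝ → ℝ) (hh : MonotoneOn h (Set.Ici 0)) :
    Admissible (fun f : B => h ‖f‖) := by
  intro m L y hcons
  obtain ⟨f, hfy, hmin⟩ := existsMinNorm hrefl L y hcons
  refine ⟨f, hfy, ?_, existsDualElt L y hfy hmin⟩
  intro g hg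
  exact hh (Set.mem_Ici.2 (norm_nonneg f)) (Set.mem_Ici.2 (norm_nonneg g)) (hmin g hg)
end

section
/- Let X = ℓ¹(ℕ, ℝ) with dual X* = ℓ∞(ℕ, ℝ), and let J denote the duality mapping of X into X*. Define L₁ = (x_i)_{i∈ℕ} ∈ ℓ∞ by x_i = i/(i+1) for i odd and x_i = 0 for i even, and L₂ = (y_i)_{i∈ℕ} ∈ ℓ∞ by y_i = i/(i+1) for i even and y_i = 0 for i odd. Then ‖L₁‖_∞ = ‖L₂‖_∞ = 1, there is no x ∈ ℓ¹ with ‖x‖₁ = 1 such that L₁(x) = 1 or L₂(x) = 1, and span{L₁, L₂} ∩ J(X) = {0}, where J(X) = ⋃_{x ∈ X} J(x). -/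
open scoped Classical

set_option maxHeartbeats 1000000

noncomputable abbrev X1 := lp (fun _ : ℕ => ℝ) 1

lemma x_summable (x : X1) : Summable (fun i => |x i|) := by
  have := (lp.memℓp x).summable (p := 1) (by norm_num)
  simpa [Real.norm_eq_abs] using this

lemma x_norm_eq (x : X1) : ‖x‖ = ∑' i, |x i| := by
  have := lp.norm_eq_tsum_rpow (p := 1) (by norm_num) x
  simpa [Real.norm_eq_abs] using this

lemma coef_summable (b : ℕ → ℝ) (C : ℝ) (hb : ∀ i, |b i| ≤ C) (x : X1) :
    Summable (fun i => b i * x i) := by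
  refine Summable.of_norm_bounded (g := fun i => C * |x i|) ((x_summable x).mul_left C) ?_
  intro i
  rw [Real.norm_eq_abs, abs_mul]
  exact mul_le_mul_of_nonneg_right (hb i) (abs_nonneg _)

lemma coef_le_opNorm (b : ℕ → ℝ) (L : X1 →L[ℝ] ℝ)
    (hL : ∀ x : X1, L x = ∑' i, b i * x i) (i : ℕ) : |b i| ≤ ‖L‖ := by
  set e : X1 := lp.single 1 i (1 : ℝ) with he
  have hnorm : ‖e‖ = 1 := by
    have := lp.norm_single (E := fun _ : ℕ => ℝ) (p := 1) (by norm_num) i (1 : ℝ)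
    exact this.trans norm_one
  have happ : L e = b i := by
    rw [hL]
    rw [tsum_eq_single i]
    · rw [he, lp.single_apply_self, mul_one]
    · intro j hj
      rw [he, lp.single_apply_ne 1 i _ hj, mul_zero]
  have := L.le_opNorm e
  rw [happ, hnorm, mul_one] at this
  simpa [Real.norm_eq_abs] using this

lemma opNorm_le_of_coef (b : ℕ → ℝ) (C : ℝ) (hC : 0 ≤ C) (hb : ∀ i, |b i| ≤ C)
    (L : X1 →L[ℝ] ℝ) (hL : ∀ x : X1, L x = ∑' i, b i * x i) : ‖L‖ ≤ C := by
  refine L.opNorm_le_bound hC (fun x => ?_)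
  rw [hL, Real.norm_eq_abs]
  have h1 : Summable (fun i => ‖b i * x i‖) := by
    simpa only [Real.norm_eq_abs] using (coef_summable b C hb x).abs
  have h2 : |∑' i, b i * x i| ≤ ∑' i, |b i * x i| := by
    simpa only [Real.norm_eq_abs] using norm_tsum_le_tsum_norm h1
  calc |∑' i, b i * x i| ≤ ∑' i, |b i * x i| := h2
    _ ≤ ∑' i, C * |x i| := by
        refine Summable.tsum_le_tsum (fun i => ?_) (coef_summable b C hb x).abs
          ((x_summable x).mul_left C)
        rw [abs_mul]
        exact mul_le_mul_of_nonneg_right (hb i) (abs_nonneg _)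
    _ = C * ‖x‖ := by rw [tsum_mul_left, x_norm_eq]

lemma apply_lt_of_coef_lt (b : ℕ → ℝ) (M : ℝ) (hb : ∀ i, |b i| < M)
    (x : X1) (hx : x ≠ 0) (L : X1 →L[ℝ] ℝ)
    (hL : ∀ y : X1, L y = ∑' i, b i * y i) : L x < M * ‖x‖ := by
  obtain ⟨i0, hi0⟩ : ∃ i, x i ≠ 0 := by
    by_contra h
    push_neg at h
    exact hx (by ext i; exact h i)
  have hM : 0 < M := lt_of_le_of_lt (abs_nonneg _) (hb 0)
  have hsum : Summable (fun i => b i * x i) :=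
    coef_summable b M (fun i => (hb i).le) x
  have hle : ∀ i, b i * x i ≤ M * |x i| := by
    intro i
    calc b i * x i ≤ |b i * x i| := le_abs_self _
      _ = |b i| * |x i| := abs_mul _ _
      _ ≤ M * |x i| := mul_le_mul_of_nonneg_right (hb i).le (abs_nonneg _)
  have hlt : b i0 * x i0 < M * |x i0| := by
    calc b i0 * x i0 ≤ |b i0| * |x i0| := (le_abs_self _).trans (abs_mul _ _).le
      _ < M * |x i0| := by
          exact mul_lt_mul_of_pos_right (hb i0) (abs_pos.mpr hi0)
  rw [hL, x_norm_eq, ← tsum_mul_left]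
  exact Summable.tsum_lt_tsum hle hlt hsum ((x_summable x).mul_left M)

lemma ratio_nonneg (i : ℕ) : 0 ≤ (i : ℝ) / (i + 1) :=
  div_nonneg (Nat.cast_nonneg i) (by positivity)

lemma ratio_lt_one (i : ℕ) : (i : ℝ) / (i + 1) < 1 :=
  (div_lt_one (by positivity)).mpr (by linarith)

lemma ratio_tendsto : Filter.Tendsto (fun n : ℕ => (n : ℝ) / (n + 1))
    Filter.atTop (nhds 1) := by
  have h : ∀ n : ℕ, (n : ℝ) / (n + 1) = 1 - 1 / (n + 1) := by
    intro n
    field_simp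
    ring
  simp_rw [h]
  have := tendsto_one_div_add_atTop_nhds_zero_nat (𝕜 := ℝ)
  simpa using (tendsto_const_nhds (x := (1:ℝ))).sub this

lemma opNorm_ge_of_tendsto (b : ℕ → ℝ) (L : X1 →L[ℝ] ℝ)
    (hL : ∀ x : X1, L x = ∑' i, b i * x i) (M : ℝ) (φ : ℕ → ℕ)
    (hten : Filter.Tendsto (fun k => |b (φ k)|) Filter.atTop (nhds M)) : M ≤ ‖L‖ :=
  le_of_tendsto' hten (fun k => coef_le_opNorm b L hL (φ k))

lemma tendsto_odd_ratio : Filter.Tendsto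
    (fun k : ℕ => ((2 * k + 1 : ℕ) : ℝ) / ((2 * k + 1 : ℕ) + 1))
    Filter.atTop (nhds 1) :=
  ratio_tendsto.comp (Filter.tendsto_atTop_mono (fun k => by simp only [id_eq]; omega) Filter.tendsto_id)

lemma tendsto_even_ratio : Filter.Tendsto
    (fun k : ℕ => ((2 * k : ℕ) : ℝ) / ((2 * k : ℕ) + 1))
    Filter.atTop (nhds 1) :=
  ratio_tendsto.comp (Filter.tendsto_atTop_mono (fun k => by simp only [id_eq]; omega) Filter.tendsto_id)

/-- In `X = ℓ¹` (non-reflexive, dual `ℓ∞`) the functionals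
`L₁ = (1/2, 0, 3/4, 0, …)` and `L₂ = (0, 2/3, 0, 4/5, …)` have norm `1`, do not attain their
norm on the unit sphere, and `span{L₁, L₂} ∩ J(X) = {0}`. -/
theorem ell_one_span_meets_dualityMap_trivially
    (a₁ a₂ : ℕ → ℝ)
    (ha₁ : ∀ i : ℕ, a₁ i = if Odd i then (i : ℝ) / (i + 1) else 0)
    (ha₂ : ∀ i : ℕ, a₂ i = if Even i then (i : ℝ) / (i + 1) else 0)
    (L₁ L₂ : lp (fun _ : ℕ => ℝ) 1 →L[ℝ] ℝ)
    (hL₁ : ∀ x : lp (fun _ : ℕ => ℝ) 1, L₁ x = ∑' i : ℕ, a₁ i * x i)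
    (hL₂ : ∀ x : lp (fun _ : ℕ => ℝ) 1, L₂ x = ∑' i : ℕ, a₂ i * x i) :
    ‖L₁‖ = 1 ∧ ‖L₂‖ = 1 ∧
    (¬ ∃ x : lp (fun _ : ℕ => ℝ) 1, ‖x‖ = 1 ∧ (L₁ x = 1 ∨ L₂ x = 1)) ∧
    (Submodule.span ℝ {L₁, L₂} : Set (lp (fun _ : ℕ => ℝ) 1 →L[ℝ] ℝ)) ∩
        (⋃ x : lp (fun _ : ℕ => ℝ) 1, dualityMap (lp (fun _ : ℕ => ℝ) 1) x) = {0} := by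
  -- basic bounds on coefficients
  have hb₁lt : ∀ i, |a₁ i| < 1 := by
    intro i; rw [ha₁ i]; split_ifs
    · rw [abs_of_nonneg (ratio_nonneg i)]; exact ratio_lt_one i
    · simp
  have hb₂lt : ∀ i, |a₂ i| < 1 := by
    intro i; rw [ha₂ i]; split_ifs
    · rw [abs_of_nonneg (ratio_nonneg i)]; exact ratio_lt_one i
    · simp
  have hb₁ : ∀ i, |a₁ i| ≤ 1 := fun i => (hb₁lt i).le
  have hb₂ : ∀ i, |a₂ i| ≤ 1 := fun i => (hb₂lt i).le
  have ha₁odd : ∀ k : ℕ, a₁ (2 * k + 1) = ((2 * k + 1 : ℕ) : ℝ) / ((2 * k + 1 : ℕ) + 1) := by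
    intro k; rw [ha₁, if_pos ⟨k, by ring⟩]
  have ha₂even : ∀ k : ℕ, a₂ (2 * k) = ((2 * k : ℕ) : ℝ) / ((2 * k : ℕ) + 1) := by
    intro k; rw [ha₂, if_pos ⟨k, by ring⟩]
  have ha₁even : ∀ k : ℕ, a₁ (2 * k) = 0 := by
    intro k; rw [ha₁, if_neg (Nat.not_odd_iff_even.mpr ⟨k, two_mul k⟩)]
  have ha₂odd : ∀ k : ℕ, a₂ (2 * k + 1) = 0 := by
    intro k; rw [ha₂, if_neg (Nat.not_even_iff_odd.mpr ⟨k, rfl⟩)]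
  -- norms
  have hn₁ : ‖L₁‖ = 1 := by
    refine le_antisymm (opNorm_le_of_coef a₁ 1 zero_le_one hb₁ L₁ hL₁) ?_
    refine opNorm_ge_of_tendsto a₁ L₁ hL₁ 1 (fun k => 2 * k + 1) ?_
    have : (fun k : ℕ => |a₁ (2 * k + 1)|) =
        fun k : ℕ => ((2 * k + 1 : ℕ) : ℝ) / ((2 * k + 1 : ℕ) + 1) := by
      funext k; rw [ha₁odd k, abs_of_nonneg (ratio_nonneg _)]
    rw [this]; exact tendsto_odd_ratio
  have hn₂ : ‖L₂‖ = 1 := by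
    refine le_antisymm (opNorm_le_of_coef a₂ 1 zero_le_one hb₂ L₂ hL₂) ?_
    refine opNorm_ge_of_tendsto a₂ L₂ hL₂ 1 (fun k => 2 * k) ?_
    have : (fun k : ℕ => |a₂ (2 * k)|) =
        fun k : ℕ => ((2 * k : ℕ) : ℝ) / ((2 * k : ℕ) + 1) := by
      funext k; rw [ha₂even k, abs_of_nonneg (ratio_nonneg _)]
    rw [this]; exact tendsto_even_ratio
  refine ⟨hn₁, hn₂, ?_, ?_⟩
  · -- non-attainment
    rintro ⟨x, hx1, hor⟩
    have hx0 : x ≠ 0 := by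
      intro h; rw [h, norm_zero] at hx1; exact zero_ne_one hx1
    rcases hor with h | h
    · have := apply_lt_of_coef_lt a₁ 1 hb₁lt x hx0 L₁ hL₁
      rw [h, hx1, one_mul] at this; exact lt_irrefl 1 this
    · have := apply_lt_of_coef_lt a₂ 1 hb₂lt x hx0 L₂ hL₂
      rw [h, hx1, one_mul] at this; exact lt_irrefl 1 this
  · -- span ∩ range J = {0}
    ext L
    simp only [Set.mem_inter_iff, Set.mem_iUnion, Set.mem_singleton_iff, SetLike.mem_coe]
    constructor
    · rintro ⟨hspan, x, hmem⟩
      rw [Submodule.mem_span_pair] at hspan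
      obtain ⟨c, d, hcd⟩ := hspan
      by_cases hx : x = 0
      · rw [hx] at hmem; unfold dualityMap at hmem; rw [if_pos rfl] at hmem
        simpa using hmem
      unfold dualityMap at hmem; rw [if_neg hx] at hmem
      obtain ⟨h1, h2⟩ := hmem
      set b : ℕ → ℝ := fun i => c * a₁ i + d * a₂ i with hbdef
      have hM0 : (0:ℝ) ≤ max |c| |d| := le_max_of_le_left (abs_nonneg c)
      have hLrep : ∀ y : X1, L y = ∑' i, b i * y i := by
        intro y
        have hs₁ : Summable (fun i => a₁ i * y i) := coef_summable a₁ 1 hb₁ y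
        have hs₂ : Summable (fun i => a₂ i * y i) := coef_summable a₂ 1 hb₂ y
        have : L y = c * (∑' i, a₁ i * y i) + d * (∑' i, a₂ i * y i) := by
          rw [← hcd]
          simp [hL₁, hL₂]
        rw [this, ← tsum_mul_left, ← tsum_mul_left,
          ← Summable.tsum_add (hs₁.mul_left c) (hs₂.mul_left d)]
        congr 1; funext i; simp [hbdef]; ring
      rcases eq_or_lt_of_le hM0 with hM | hM
      · -- c = d = 0
        have hc : c = 0 := by
          have := le_max_left |c| |d|; rw [← hM] at this
          exact abs_eq_zero.mp (le_antisymm this (abs_nonneg c))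
        have hd : d = 0 := by
          have := le_max_right |c| |d|; rw [← hM] at this
          exact abs_eq_zero.mp (le_antisymm this (abs_nonneg d))
        rw [← hcd, hc, hd]; simp
      · exfalso
        set M := max |c| |d| with hMdef
        have hbM : ∀ i, |b i| < M := by
          intro i
          rcases Nat.even_or_odd i with ⟨k, hk⟩ | ⟨k, hk⟩
          · have hi : i = 2 * k := by omega
            have : b i = d * a₂ i := by simp [hbdef, hi, ha₁even k]
            rw [this, abs_mul, hi, ha₂even k, abs_of_nonneg (ratio_nonneg _)]
            calc |d| * (((2 * k : ℕ):ℝ) / ((2 * k : ℕ) + 1))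
                ≤ M * (((2 * k : ℕ):ℝ) / ((2 * k : ℕ) + 1)) :=
                  mul_le_mul_of_nonneg_right (le_max_right _ _) (ratio_nonneg _)
              _ < M * 1 := by
                  exact mul_lt_mul_of_pos_left (ratio_lt_one _) hM
              _ = M := mul_one M
          · have hi : i = 2 * k + 1 := by omega
            have : b i = c * a₁ i := by simp [hbdef, hi, ha₂odd k]
            rw [this, abs_mul, hi, ha₁odd k, abs_of_nonneg (ratio_nonneg _)]
            calc |c| * (((2 * k + 1 : ℕ):ℝ) / ((2 * k + 1 : ℕ) + 1))
                ≤ M * (((2 * k + 1 : ℕ):ℝ) / ((2 * k + 1 : ℕ) + 1)) :=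
                  mul_le_mul_of_nonneg_right (le_max_left _ _) (ratio_nonneg _)
              _ < M * 1 := mul_lt_mul_of_pos_left (ratio_lt_one _) hM
              _ = M := mul_one M
        have hlt : L x < M * ‖x‖ := apply_lt_of_coef_lt b M hbM x hx L hLrep
        -- ‖L‖ ≥ M
        have hc_le : |c| ≤ ‖L‖ := by
          refine opNorm_ge_of_tendsto b L hLrep |c| (fun k => 2 * k + 1) ?_
          have heq : (fun k : ℕ => |b (2 * k + 1)|) = fun k : ℕ =>
              |c| * (((2 * k + 1 : ℕ):ℝ) / ((2 * k + 1 : ℕ) + 1)) := by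
            funext k
            have : b (2 * k + 1) = c * a₁ (2 * k + 1) := by
              simp [hbdef, ha₂odd k]
            rw [this, abs_mul, ha₁odd k, abs_of_nonneg (ratio_nonneg _)]
          rw [heq]
          simpa using (tendsto_const_nhds (x := |c|)).mul tendsto_odd_ratio
        have hd_le : |d| ≤ ‖L‖ := by
          refine opNorm_ge_of_tendsto b L hLrep |d| (fun k => 2 * k) ?_
          have heq : (fun k : ℕ => |b (2 * k)|) = fun k : ℕ =>
              |d| * (((2 * k : ℕ):ℝ) / ((2 * k : ℕ) + 1)) := by
            funext k
            have : b (2 * k) = d * a₂ (2 * k) := by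
              simp [hbdef, ha₁even k]
            rw [this, abs_mul, ha₂even k, abs_of_nonneg (ratio_nonneg _)]
          rw [heq]
          simpa using (tendsto_const_nhds (x := |d|)).mul tendsto_even_ratio
        have hML : M ≤ ‖L‖ := max_le hc_le hd_le
        have hxpos : 0 < ‖x‖ := norm_pos_iff.mpr hx
        have : M * ‖x‖ ≤ ‖L‖ * ‖x‖ := mul_le_mul_of_nonneg_right hML hxpos.le
        rw [← h1] at this
        exact lt_irrefl _ (lt_of_lt_of_le hlt this)
    · rintro rfl
      refine ⟨Submodule.zero_mem _, 0, ?_⟩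
      unfold dualityMap; rw [if_pos rfl]; rfl
end

section
/- Let V be a real normed linear space with duality mapping J with gauge function μ, and define M : V → ℝ by M(x) = ∫₀^{‖x‖} μ(t) dt. Then M is convex, and for any x ∈ V with x ≠ 0 the subdifferential of M at x equals the duality map value: ∂M(x) = J(x), where ∂M(x) = {x* ∈ V* : M(y) ≥ M(x) + x*(y − x) for all y ∈ V}. -/
open scoped Classical
open MeasureTheory

lemma gauge_intable (μ : ℝ → ℝ) (hcont : ContinuousOn μ (Set.Ici 0))
    (a b : ℝ) (ha : 0 ≤ a) (hab : a ≤ b) : IntervalIntegrable μ volume a b :=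
  (hcont.mono (by rw [Set.uIcc_of_le hab]; exact fun t ht => ha.trans ht.1)).intervalIntegrable

lemma gauge_int_lb (μ : ℝ → ℝ) (hcont : ContinuousOn μ (Set.Ici 0))
    (hmono : MonotoneOn μ (Set.Ici 0))
    (a b : ℝ) (ha : 0 ≤ a) (hab : a ≤ b) :
    μ a * (b - a) ≤ ∫ t in a..b, μ t := by
  have h := intervalIntegral.integral_mono_on hab (intervalIntegrable_const (c := μ a))
    (gauge_intable μ hcont a b ha hab)
    (fun t ht => hmono (Set.mem_Ici.mpr ha) (Set.mem_Ici.mpr (ha.trans ht.1)) ht.1)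
  simpa [intervalIntegral.integral_const, smul_eq_mul, mul_comm] using h

lemma gauge_int_ub (μ : ℝ → ℝ) (hcont : ContinuousOn μ (Set.Ici 0))
    (hmono : MonotoneOn μ (Set.Ici 0))
    (a b : ℝ) (ha : 0 ≤ a) (hab : a ≤ b) :
    (∫ t in a..b, μ t) ≤ μ b * (b - a) := by
  have h := intervalIntegral.integral_mono_on hab
    (gauge_intable μ hcont a b ha hab) (intervalIntegrable_const (c := μ b))
    (fun t ht => hmono (Set.mem_Ici.mpr (ha.trans ht.1)) (Set.mem_Ici.mpr (ha.trans hab)) ht.2)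
  simpa [intervalIntegral.integral_const, smul_eq_mul, mul_comm] using h

lemma gauge_phi_sub (μ : ℝ → ℝ) (hcont : ContinuousOn μ (Set.Ici 0))
    (a b : ℝ) (ha : 0 ≤ a) (hab : a ≤ b) :
    (∫ t in (0:ℝ)..b, μ t) - (∫ t in (0:ℝ)..a, μ t) = ∫ t in a..b, μ t := by
  have h := intervalIntegral.integral_add_adjacent_intervals
    (gauge_intable μ hcont 0 a le_rfl ha) (gauge_intable μ hcont a b ha hab)
  linarith

lemma gauge_phi_lb (μ : ℝ → ℝ) (hcont : ContinuousOn μ (Set.Ici 0))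
    (hmono : MonotoneOn μ (Set.Ici 0)) (a b : ℝ) (ha : 0 ≤ a) (hab : a ≤ b) :
    μ a * (b - a) ≤ (∫ t in (0:ℝ)..b, μ t) - (∫ t in (0:ℝ)..a, μ t) := by
  rw [gauge_phi_sub μ hcont a b ha hab]; exact gauge_int_lb μ hcont hmono a b ha hab

lemma gauge_phi_ub (μ : ℝ → ℝ) (hcont : ContinuousOn μ (Set.Ici 0))
    (hmono : MonotoneOn μ (Set.Ici 0)) (a b : ℝ) (ha : 0 ≤ a) (hab : a ≤ b) :
    (∫ t in (0:ℝ)..b, μ t) - (∫ t in (0:ℝ)..a, μ t) ≤ μ b * (b - a) := by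
  rw [gauge_phi_sub μ hcont a b ha hab]; exact gauge_int_ub μ hcont hmono a b ha hab

lemma gauge_phi_mono (μ : ℝ → ℝ) (hcont : ContinuousOn μ (Set.Ici 0))
    (hmono : MonotoneOn μ (Set.Ici 0)) (hzero : μ 0 = 0)
    (a b : ℝ) (ha : 0 ≤ a) (hab : a ≤ b) :
    (∫ t in (0:ℝ)..a, μ t) ≤ ∫ t in (0:ℝ)..b, μ t := by
  have h := gauge_phi_lb μ hcont hmono a b ha hab
  have hpos : 0 ≤ μ a := by simpa [hzero] using hmono Set.self_mem_Ici (Set.mem_Ici.mpr ha) ha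
  nlinarith

lemma gauge_phi_convex (μ : ℝ → ℝ) (hcont : ContinuousOn μ (Set.Ici 0))
    (hmono : MonotoneOn μ (Set.Ici 0))
    (r₁ r₂ a b : ℝ) (h₁ : 0 ≤ r₁) (h₂ : 0 ≤ r₂) (ha : 0 ≤ a) (hb : 0 ≤ b)
    (hab : a + b = 1) :
    (∫ t in (0:ℝ)..(a * r₁ + b * r₂), μ t) ≤
      a * (∫ t in (0:ℝ)..r₁, μ t) + b * ∫ t in (0:ℝ)..r₂, μ t := by
  wlog hr : r₁ ≤ r₂ generalizing r₁ r₂ a b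
  · have h := this r₂ r₁ b a h₂ h₁ hb ha (by linarith) (by linarith)
    rw [add_comm (b * r₂), add_comm (b * _)] at h
    linarith [h]
  set r := a * r₁ + b * r₂ with hrdef
  have hr1r : r₁ ≤ r := by nlinarith
  have hrr2 : r ≤ r₂ := by nlinarith
  have hrpos : 0 ≤ r := le_trans h₁ hr1r
  have k1 := gauge_phi_ub μ hcont hmono r₁ r h₁ hr1r
  have k2 := gauge_phi_lb μ hcont hmono r r₂ hrpos hrr2
  have e1 : r - r₁ = b * (r₂ - r₁) := by rw [hrdef]; nlinarith
  have e2 : r₂ - r = a * (r₂ - r₁) := by rw [hrdef]; nlinarith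
  rw [e1, mul_left_comm] at k1
  rw [e2, mul_left_comm] at k2
  have k1' := mul_le_mul_of_nonneg_left k1 ha
  have k2' := mul_le_mul_of_nonneg_left k2 hb
  have hφ : a * (∫ t in (0:ℝ)..r, μ t) + b * (∫ t in (0:ℝ)..r, μ t)
      = ∫ t in (0:ℝ)..r, μ t := by rw [← add_mul, hab, one_mul]
  have e : a * (b * (μ r * (r₂ - r₁))) = b * (a * (μ r * (r₂ - r₁))) := by ring
  linarith [k1', k2', hφ, e]
/-- For `M(x) = ∫₀^{‖x‖} μ(t) dt`, the functional `M` is convex and for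
every `x ≠ 0` its subdifferential equals the duality map value: `∂M(x) = J(x)`. -/
theorem subdifferential_of_integral_functional_eq_dualityMap
    {V : Type*} [NormedAddCommGroup V] [NormedSpace ℝ V]
    (μ : ℝ → ℝ) (hμ : IsGauge μ)
    (M : V → ℝ) (hM : ∀ x : V, M x = ∫ t in (0 : ℝ)..‖x‖, μ t) :
    ConvexOn ℝ Set.univ M ∧
    ∀ x : V, x ≠ 0 →
      {xs : V →L[ℝ] ℝ | ∀ y : V, M x + xs (y - x) ≤ M y} = dualityMapGauge μ x := by
  obtain ⟨hcont, hsmono, hzero, -⟩ := hμ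
  have hmono : MonotoneOn μ (Set.Ici 0) := hsmono.monotoneOn
  have hμ0 : ∀ t : ℝ, 0 ≤ t → 0 ≤ μ t := fun t ht => by
    simpa [hzero] using hmono Set.self_mem_Ici (Set.mem_Ici.mpr ht) ht
  constructor
  · refine ⟨convex_univ, ?_⟩
    intro x _ y _ a b ha hb hab
    rw [hM, hM, hM]
    calc (∫ t in (0:ℝ)..‖a • x + b • y‖, μ t)
        ≤ ∫ t in (0:ℝ)..(a * ‖x‖ + b * ‖y‖), μ t := by
          apply gauge_phi_mono μ hcont hmono hzero _ _ (norm_nonneg _)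
          calc ‖a • x + b • y‖ ≤ ‖a • x‖ + ‖b • y‖ := norm_add_le _ _
            _ = a * ‖x‖ + b * ‖y‖ := by
                rw [norm_smul, norm_smul, Real.norm_of_nonneg ha, Real.norm_of_nonneg hb]
      _ ≤ a * (∫ t in (0:ℝ)..‖x‖, μ t) + b * ∫ t in (0:ℝ)..‖y‖, μ t :=
          gauge_phi_convex μ hcont hmono _ _ a b (norm_nonneg x) (norm_nonneg y) ha hb hab
  · intro x hx
    have hxn : 0 < ‖x‖ := norm_pos_iff.mpr hx
    ext xs
    simp only [Set.mem_setOf_eq, dualityMapGauge, if_neg hx]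
    constructor
    · intro h
      -- Step 1 : scaled test vectors
      have key : ∀ s : ℝ, 0 < s →
          ‖x‖ * (∫ t in (0:ℝ)..‖x‖, μ t) + (s - ‖x‖) * xs x
            ≤ ‖x‖ * ∫ t in (0:ℝ)..s, μ t := by
        intro s hs
        have hy : ‖(s / ‖x‖) • x‖ = s := by
          rw [norm_smul, Real.norm_of_nonneg (by positivity)]
          field_simp
        have h2 := h ((s / ‖x‖) • x)
        rw [hM, hM, hy, map_sub, ContinuousLinearMap.map_smul, smul_eq_mul] at h2
        have h3 := mul_le_mul_of_nonneg_left h2 hxn.le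
        have e : ‖x‖ * (s / ‖x‖ * xs x) = s * xs x := by field_simp
        nlinarith [h3, e]
      -- xs x / ‖x‖ ≤ μ s for s > ‖x‖
      have hub : ∀ s ∈ Set.Ioi ‖x‖, xs x / ‖x‖ ≤ μ s := by
        intro s hs
        have hs' : ‖x‖ < s := hs
        rw [div_le_iff₀ hxn]
        have k := key s (hxn.trans hs')
        have u := mul_le_mul_of_nonneg_left
          (gauge_phi_ub μ hcont hmono ‖x‖ s hxn.le hs'.le) hxn.le
        nlinarith [k, u]
      -- μ s ≤ xs x / ‖x‖ for 0 < s < ‖x‖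
      have hlb : ∀ s ∈ Set.Ioo 0 ‖x‖, μ s ≤ xs x / ‖x‖ := by
        intro s hs
        rw [le_div_iff₀ hxn]
        have k := key s hs.1
        have u := mul_le_mul_of_nonneg_left
          (gauge_phi_lb μ hcont hmono s ‖x‖ hs.1.le hs.2.le) hxn.le
        nlinarith [k, u, hs.2]
      -- limits
      have hcw : ContinuousWithinAt μ (Set.Ici 0) ‖x‖ := hcont _ (Set.mem_Ici.mpr hxn.le)
      have hle : xs x / ‖x‖ ≤ μ ‖x‖ := by
        have htend : Filter.Tendsto μ (nhdsWithin ‖x‖ (Set.Ioi ‖x‖)) (nhds (μ ‖x‖)) :=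
          hcw.tendsto.mono_left (nhdsWithin_mono _ (fun t ht => hxn.le.trans (le_of_lt ht)))
        exact ge_of_tendsto htend (Filter.eventually_of_mem self_mem_nhdsWithin hub)
      have hge : μ ‖x‖ ≤ xs x / ‖x‖ := by
        have hne : Filter.NeBot (nhdsWithin ‖x‖ (Set.Ioo 0 ‖x‖)) := by
          refine mem_closure_iff_nhdsWithin_neBot.mp ?_
          rw [closure_Ioo hxn.ne]
          exact ⟨hxn.le, le_rfl⟩
        have htend : Filter.Tendsto μ (nhdsWithin ‖x‖ (Set.Ioo 0 ‖x‖)) (nhds (μ ‖x‖)) :=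
          hcw.tendsto.mono_left (nhdsWithin_mono _ (fun t ht => ht.1.le))
        exact le_of_tendsto htend (Filter.eventually_of_mem self_mem_nhdsWithin hlb)
      have hxsx : xs x = μ ‖x‖ * ‖x‖ := by
        have := le_antisymm hle hge
        field_simp at this
        linarith
      -- Step 2 : norm of xs
      have hbound : ∀ v : V, xs v ≤ μ ‖x‖ * ‖v‖ := by
        intro v
        rcases eq_or_ne v 0 with rfl | hv
        · simp
        · have hvn : 0 < ‖v‖ := norm_pos_iff.mpr hv
          have hy : ‖(‖x‖ / ‖v‖) • v‖ = ‖x‖ := by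
            rw [norm_smul, Real.norm_of_nonneg (by positivity)]
            field_simp
          have h2 := h ((‖x‖ / ‖v‖) • v)
          rw [hM, hM, hy, map_sub, ContinuousLinearMap.map_smul, smul_eq_mul] at h2
          have h3 : ‖x‖ / ‖v‖ * xs v ≤ xs x := by linarith
          rw [hxsx] at h3
          have h4 := mul_le_mul_of_nonneg_left h3 hvn.le
          have e : ‖v‖ * (‖x‖ / ‖v‖ * xs v) = ‖x‖ * xs v := by field_simp
          nlinarith [h4, e]
      have hnle : ‖xs‖ ≤ μ ‖x‖ := by
        refine ContinuousLinearMap.opNorm_le_bound _ (hμ0 _ (norm_nonneg x)) (fun v => ?_)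
        rw [Real.norm_eq_abs, abs_le]
        refine ⟨?_, hbound v⟩
        have := hbound (-v)
        rw [map_neg, norm_neg] at this
        linarith
      have hnge : μ ‖x‖ ≤ ‖xs‖ := by
        have h1 : xs x ≤ ‖xs‖ * ‖x‖ := (le_abs_self _).trans (xs.le_opNorm x)
        rw [hxsx] at h1
        exact le_of_mul_le_mul_right h1 hxn
      have hn : ‖xs‖ = μ ‖x‖ := le_antisymm hnle hnge
      exact ⟨by rw [hxsx, hn], hn⟩
    · rintro ⟨hL1, hL2⟩ y
      rw [hM, hM]
      have hy : xs y ≤ ‖xs‖ * ‖y‖ := (le_abs_self _).trans (xs.le_opNorm y)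
      have hsub : xs (y - x) ≤ μ ‖x‖ * ‖y‖ - μ ‖x‖ * ‖x‖ := by
        rw [map_sub, hL1, hL2]
        have := hy
        rw [hL2] at this
        linarith
      rcases le_total ‖x‖ ‖y‖ with hc | hc
      · have := gauge_phi_lb μ hcont hmono ‖x‖ ‖y‖ hxn.le hc
        nlinarith [hsub, this]
      · have := gauge_phi_ub μ hcont hmono ‖y‖ ‖x‖ (norm_nonneg y) hc
        nlinarith [hsub, this]
end

section
/- Let B be a reflexive real Banach space with duality mapping J, let L₁,…,L_m ∈ B* and set Z = ⋂_{i=1}^m ker(L_i). Then for every f₀ ∈ B there exists f_T ∈ Z such that J(f₀ + f_T) ∩ span{L₁,…,L_m} ≠ ∅, i.e. there exist c₁,…,c_m ∈ ℝ with Σ_{i=1}^m c_i L_i ∈ J(f₀ + f_T). -/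
open scoped Classical

set_option maxHeartbeats 1000000 in
/-- Auxiliary: a continuous linear functional on a finite-dimensional real normed space
attains its norm on the unit sphere (when it is nonzero). -/
lemma aux_exists_norm_attain {E : Type*} [NormedAddCommGroup E] [NormedSpace ℝ E]
    [FiniteDimensional ℝ E] (ψ : E →L[ℝ] ℝ) (hψ : 0 < ‖ψ‖) :
    ∃ K : E, ‖K‖ = 1 ∧ ψ K = ‖ψ‖ := by
  obtain ⟨K₀, hK₀mem, hK₀max⟩ :=
    (isCompact_closedBall (0 : E) 1).exists_isMaxOn
      ⟨0, Metric.mem_closedBall_self zero_le_one⟩ ψ.continuous.continuousOn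
  have hK₀le : ‖K₀‖ ≤ 1 := by simpa using hK₀mem
  have hψK₀0 : (0 : ℝ) ≤ ψ K₀ := by
    have := hK₀max (Metric.mem_closedBall_self zero_le_one)
    simpa using this
  have hdle : ‖ψ‖ ≤ ψ K₀ := by
    refine ContinuousLinearMap.opNorm_le_bound ψ hψK₀0 fun K => ?_
    rcases eq_or_ne K 0 with rfl | hK
    · simp
    · have hKn : (0 : ℝ) < ‖K‖ := norm_pos_iff.mpr hK
      have hmem : ∀ s : ℝ, |s| = 1 → (s * ‖K‖⁻¹) • K ∈ Metric.closedBall (0 : E) 1 := by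
        intro s hs
        have hns := norm_smul (s * ‖K‖⁻¹) K
        rw [Metric.mem_closedBall, dist_zero_right, hns, Real.norm_eq_abs,
          abs_mul, abs_inv, abs_norm, hs, one_mul, inv_mul_cancel₀ hKn.ne']
      have h1a : ψ ((1 * ‖K‖⁻¹) • K) ≤ ψ K₀ := hK₀max (hmem 1 (by norm_num))
      have h2a : ψ ((-1 * ‖K‖⁻¹) • K) ≤ ψ K₀ := hK₀max (hmem (-1) (by norm_num))
      rw [one_mul, map_smul, smul_eq_mul] at h1a
      rw [map_smul, smul_eq_mul, neg_one_mul, neg_mul] at h2a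
      have habs : |‖K‖⁻¹ * ψ K| ≤ ψ K₀ := abs_le.mpr ⟨by linarith, h1a⟩
      have heq : |ψ K| = ‖K‖ * |‖K‖⁻¹ * ψ K| := by
        rw [abs_mul, abs_inv, abs_norm, ← mul_assoc, mul_inv_cancel₀ hKn.ne', one_mul]
      rw [Real.norm_eq_abs, heq, mul_comm (ψ K₀) ‖K‖]
      exact mul_le_mul_of_nonneg_left habs hKn.le
  have hψK₀le : ψ K₀ ≤ ‖ψ‖ := by
    calc ψ K₀ ≤ ‖ψ K₀‖ := le_abs_self _
      _ ≤ ‖ψ‖ * ‖K₀‖ := ψ.le_opNorm K₀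
      _ ≤ ‖ψ‖ * 1 := mul_le_mul_of_nonneg_left hK₀le hψ.le
      _ = ‖ψ‖ := mul_one _
  have hψK₀ : ψ K₀ = ‖ψ‖ := le_antisymm hψK₀le hdle
  have hK₀norm : ‖K₀‖ = 1 := by
    refine le_antisymm hK₀le ?_
    by_contra hlt
    push_neg at hlt
    have : ψ K₀ ≤ ‖ψ‖ * ‖K₀‖ := le_trans (le_abs_self _) (ψ.le_opNorm K₀)
    rw [hψK₀] at this
    nlinarith
  exact ⟨K₀, hK₀norm, hψK₀⟩

/-- In a reflexive real Banach space, for any `L₁,…,L_m ∈ B*` and any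
`f₀ ∈ B` there exists `f_T ∈ Z = ⋂ᵢ ker Lᵢ` such that
`J(f₀ + f_T) ∩ span{L₁,…,L_m} ≠ ∅`. -/
theorem exists_kernel_shift_with_dual_in_span
    {B : Type*} [NormedAddCommGroup B] [NormedSpace ℝ B] [CompleteSpace B]
    (hrefl : IsReflexive B) {m : ℕ} (L : Fin m → (B →L[ℝ] ℝ)) (f₀ : B) :
    ∃ fT : B, (∀ i, L i fT = 0) ∧
      ∃ c : Fin m → ℝ, (∑ i, c i • L i) ∈ dualityMap B (f₀ + fT) := by
  obtain ⟨M, hM⟩ : ∃ M : Submodule ℝ (B →L[ℝ] ℝ), M = Submodule.span ℝ (Set.range L) :=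
    ⟨_, rfl⟩
  haveI : FiniteDimensional ℝ M := by
    rw [hM]; exact FiniteDimensional.span_of_finite ℝ (Set.finite_range L)
  letI : NormedAddCommGroup (M →L[ℝ] ℝ) :=
    @ContinuousLinearMap.toNormedAddCommGroup ℝ ℝ M ℝ _ _ _ _ M.normedSpace _ (RingHom.id ℝ) _
  -- evaluation at `f₀`, restricted to `M`, as an opaque functional
  obtain ⟨ψ, hψeval⟩ : ∃ ψ : M →L[ℝ] ℝ, ∀ K : M, ψ K = (K : B →L[ℝ] ℝ) f₀ :=
    ⟨(NormedSpace.inclusionInDoubleDual ℝ B f₀).comp M.subtypeL, fun _ => rfl⟩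
  -- Hahn–Banach extension to all of `B*`
  obtain ⟨g, hg, hgnorm⟩ := exists_extension_norm_eq M ψ
  -- reflexivity: `g` is evaluation at some `f : B`
  obtain ⟨f, hf⟩ := hrefl g
  have hfnorm : ‖f‖ = ‖ψ‖ := by
    rw [← hgnorm, ← hf]
    exact ((NormedSpace.inclusionInDoubleDualLi ℝ).norm_map f).symm
  have hKf : ∀ K : M, (K : B →L[ℝ] ℝ) f = (K : B →L[ℝ] ℝ) f₀ := by
    intro K
    have h1 : g (K : B →L[ℝ] ℝ) = (K : B →L[ℝ] ℝ) f := by rw [← hf]; rfl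
    rw [← h1, hg K, hψeval K]
  have hLmem : ∀ i, L i ∈ M := fun i =>
    hM ▸ Submodule.subset_span (Set.mem_range_self i)
  refine ⟨f - f₀, fun i => ?_, ?_⟩
  · have := hKf ⟨L i, hLmem i⟩
    simp only [map_sub]
    simpa using sub_eq_zero.mpr this
  have hff : f₀ + (f - f₀) = f := by abel
  rw [hff]
  rcases eq_or_lt_of_le (norm_nonneg ψ) with hd0 | hdpos
  · -- degenerate case: `‖ψ‖ = 0`, so `f = 0`
    have hf0 : f = 0 := by rw [← norm_eq_zero, hfnorm, ← hd0]
    refine ⟨0, ?_⟩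
    have hsum : ∑ i, (0 : Fin m → ℝ) i • L i = (0 : B →L[ℝ] ℝ) := by simp
    rw [hsum, dualityMap, if_pos hf0]
    rfl
  · -- main case: `ψ` attains its norm at some `K₀` with `‖K₀‖ = 1`
    obtain ⟨K₀, hK₀norm, hψK₀⟩ := @aux_exists_norm_attain M _ M.normedSpace _ ψ hdpos
    have hK₀f : (K₀ : B →L[ℝ] ℝ) f = ‖ψ‖ := by
      rw [hKf K₀, ← hψeval K₀, hψK₀]
    have hcoenorm : ‖(K₀ : B →L[ℝ] ℝ)‖ = 1 := hK₀norm
    have hsmem : ‖ψ‖ • (K₀ : B →L[ℝ] ℝ) ∈ Submodule.span ℝ (Set.range L) := by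
      rw [← hM]; exact M.smul_mem ‖ψ‖ K₀.2
    obtain ⟨c, hc⟩ := (Submodule.mem_span_range_iff_exists_fun ℝ).mp hsmem
    refine ⟨c, ?_⟩
    rw [hc]
    have hfne : f ≠ 0 := by
      intro h
      rw [h, norm_zero] at hfnorm
      exact absurd hfnorm.symm (ne_of_gt hdpos)
    rw [dualityMap, if_neg hfne]
    have hns : ‖(‖ψ‖ : ℝ) • (K₀ : B →L[ℝ] ℝ)‖ = ‖ψ‖ :=  by
      rw [norm_smul ‖ψ‖ (K₀ : B →L[ℝ] ℝ), hcoenorm, Real.norm_eq_abs, abs_of_pos hdpos, mul_one]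
    constructor
    · have happ : ((‖ψ‖ : ℝ) • (K₀ : B →L[ℝ] ℝ)) f = ‖ψ‖ * ‖ψ‖ := by
        simp [hK₀f]
      rw [happ, hns, hfnorm]
    · rw [hns, hfnorm]
end

section
/- Let B be a reflexive real Banach space with duality mapping J, let L₁,…,L_m ∈ B*, and suppose f₀ ∈ B satisfies: there exist c₁,…,c_m ∈ ℝ with L̂ = Σ_{i=1}^m c_i L_i ∈ J(f₀). Then for every g ∈ Z = ⋂_{i=1}^m ker(L_i) one has ‖f₀‖ ≤ ‖f₀ + g‖; moreover, if ‖f₀‖ = ‖f₀ + g‖ then ‖f₀‖ = ‖f₀ + t·g‖ for all t ∈ [0,1], i.e. f₀ and f₀ + g lie on a straight segment of the sphere of radius ‖f₀‖ centred at the origin. -/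
open scoped Classical

/-- If `L̂ = Σ cᵢ Lᵢ ∈ J(f₀)` then for every `g ∈ Z = ⋂ᵢ ker Lᵢ` one has
`‖f₀‖ ≤ ‖f₀ + g‖`; moreover if `‖f₀‖ = ‖f₀ + g‖` then `‖f₀‖ = ‖f₀ + t g‖` for all
`t ∈ [0,1]`, i.e. `f₀` and `f₀ + g` lie on a straight segment of the sphere of radius
`‖f₀‖`. -/
theorem norm_nondecreasing_on_kernel_shifts
    {B : Type*} [NormedAddCommGroup B] [NormedSpace ℝ B] [CompleteSpace B]
    (hrefl : IsReflexive B) {m : ℕ} (L : Fin m → (B →L[ℝ] ℝ)) (f₀ : B)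
    (c : Fin m → ℝ) (hc : (∑ i, c i • L i) ∈ dualityMap B f₀) :
    ∀ g : B, (∀ i, L i g = 0) →
      ‖f₀‖ ≤ ‖f₀ + g‖ ∧
      (‖f₀‖ = ‖f₀ + g‖ → ∀ t ∈ Set.Icc (0 : ℝ) 1, ‖f₀ + t • g‖ = ‖f₀‖) := by
  intro g hg
  set Lh := (∑ i, c i • L i) with hLh
  have hLhg : Lh g = 0 := by
    simp [hLh, ContinuousLinearMap.sum_apply, hg]
  by_cases h0 : f₀ = 0
  · subst h0
    constructor
    · simpa using norm_nonneg (0 + g)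
    · intro heq t ht
      have : g = 0 := by
        have := heq
        simp at this
        exact norm_eq_zero.mp this.symm
      simp [this]
  · rw [dualityMap, if_neg h0] at hc
    obtain ⟨hval, hnorm⟩ := hc
    have hpos : 0 < ‖f₀‖ := norm_pos_iff.mpr h0
    have key : ∀ x : B, Lh x = 0 → ‖f₀‖ ≤ ‖f₀ + x‖ := by
      intro x hx
      have h1 : Lh (f₀ + x) = ‖f₀‖ * ‖f₀‖ := by
        rw [map_add, hx, add_zero, hval, hnorm]
      have h2 : Lh (f₀ + x) ≤ ‖Lh‖ * ‖f₀ + x‖ :=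
        le_trans (le_abs_self _) (Lh.le_opNorm _)
      rw [h1, hnorm] at h2
      exact le_of_mul_le_mul_left h2 hpos
    refine ⟨key g hLhg, ?_⟩
    intro heq t ht
    have hle : ‖f₀‖ ≤ ‖f₀ + t • g‖ := key (t • g) (by simp [hLhg])
    have hge : ‖f₀ + t • g‖ ≤ ‖f₀‖ := by
      have : f₀ + t • g = (1 - t) • f₀ + t • (f₀ + g) := by
        module
      calc ‖f₀ + t • g‖ = ‖(1 - t) • f₀ + t • (f₀ + g)‖ := by rw [this]
        _ ≤ ‖(1 - t) • f₀‖ + ‖t • (f₀ + g)‖ := norm_add_le _ _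
        _ = (1 - t) * ‖f₀‖ + t * ‖f₀ + g‖ := by
            rw [norm_smul, norm_smul, Real.norm_eq_abs, Real.norm_eq_abs,
              abs_of_nonneg (by linarith [ht.2]), abs_of_nonneg ht.1]
        _ = ‖f₀‖ := by rw [← heq]; ring
    linarith
end
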